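/- arXiv:2003.07802 — 10 statements merged into one kernel-verified Lean document; each statement's English description precedes it below -/
import Mathlib

section
/- Fix positive integers n, p, a real n×p matrix X and y ∈ ℝⁿ. The function β̂gf(t) = (XᵀX)⁺(I − exp(−t XᵀX/n)) Xᵀ y satisfies β̂gf(0) = 0 and, for every t ≥ 0, the derivative d/dt β̂gf(t) exists and equals (1/n) Xᵀ (y − X β̂gf(t)); that is, β̂gf solves the gradient flow differential equation for the least squares loss (1/2n)‖y − Xβ‖₂². -/
open Matrix Filter

/-- The Moore–Penrose pseudoinverse of a real matrix, defined via the standard limit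
characterization `A⁺ = lim_{δ → 0⁺} (AᵀA + δ I)⁻¹ Aᵀ`. -/
noncomputable def moorePenrose {m n : ℕ} (A : Matrix (Fin m) (Fin n) ℝ) :
    Matrix (Fin n) (Fin m) ℝ :=
  limUnder (nhdsWithin (0 : ℝ) (Set.Ioi 0)) fun δ => (Aᵀ * A + δ • (1 : Matrix (Fin n) (Fin n) ℝ))⁻¹ * Aᵀ

/-- The gradient flow estimator `β̂gf(t) = (XᵀX)⁺ (I − exp(−t XᵀX/n)) Xᵀ y`. -/
noncomputable def betaGF {n p : ℕ} (X : Matrix (Fin n) (Fin p) ℝ) (y : Fin n → ℝ)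
    (t : ℝ) : Fin p → ℝ :=
  (moorePenrose (Xᵀ * X) *
      ((1 : Matrix (Fin p) (Fin p) ℝ) - NormedSpace.exp (-(t • ((n : ℝ)⁻¹ • (Xᵀ * X))))) *
      Xᵀ) *ᵥ y

noncomputable section GFProof

namespace GFProof

variable {p : ℕ} {A : Matrix (Fin p) (Fin p) ℝ} (hA : A.IsHermitian)

/-- The orthogonal eigenvector matrix. -/
def Uu (hA : A.IsHermitian) : Matrix (Fin p) (Fin p) ℝ := hA.eigenvectorUnitary

/-- Conjugation of a diagonal matrix by the eigenvector matrix. -/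
def Phi (hA : A.IsHermitian) (v : Fin p → ℝ) : Matrix (Fin p) (Fin p) ℝ :=
  Uu hA * diagonal v * star (Uu hA)

lemma Uu_mul_star : Uu hA * star (Uu hA) = 1 :=
  (Matrix.mem_unitaryGroup_iff).mp hA.eigenvectorUnitary.2

lemma star_mul_Uu : star (Uu hA) * Uu hA = 1 :=
  (Matrix.mem_unitaryGroup_iff').mp hA.eigenvectorUnitary.2

lemma Phi_mul (v w : Fin p → ℝ) : Phi hA v * Phi hA w = Phi hA (v * w) := by
  unfold Phi
  simp only [Matrix.mul_assoc]
  rw [← Matrix.mul_assoc (star (Uu hA)) (Uu hA), star_mul_Uu, Matrix.one_mul,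
    ← Matrix.mul_assoc (diagonal v) (diagonal w), diagonal_mul_diagonal]
  rfl

lemma Phi_one : Phi hA 1 = 1 := by
  unfold Phi
  have h1 : (1 : Fin p → ℝ) = fun _ => (1:ℝ) := rfl
  rw [h1, diagonal_one, Matrix.mul_one, Uu_mul_star]

lemma Phi_zero : Phi hA 0 = 0 := by
  unfold Phi
  have h1 : (0 : Fin p → ℝ) = fun _ => (0:ℝ) := rfl
  rw [h1, diagonal_zero, Matrix.mul_zero, Matrix.zero_mul]

lemma Phi_add (v w : Fin p → ℝ) : Phi hA (v + w) = Phi hA v + Phi hA w := by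
  unfold Phi
  have h1 : v + w = fun i => v i + w i := rfl
  rw [h1, ← diagonal_add, Matrix.mul_add, Matrix.add_mul]

lemma Phi_sub (v w : Fin p → ℝ) : Phi hA (v - w) = Phi hA v - Phi hA w := by
  unfold Phi
  have h1 : v - w = fun i => v i - w i := rfl
  rw [h1, ← diagonal_sub, Matrix.mul_sub, Matrix.sub_mul]

lemma Phi_smul (c : ℝ) (v : Fin p → ℝ) : Phi hA (c • v) = c • Phi hA v := by
  unfold Phi
  rw [diagonal_smul, Matrix.mul_smul, Matrix.smul_mul]

lemma Phi_eigenvalues : Phi hA hA.eigenvalues = A := by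
  conv_rhs => rw [hA.spectral_theorem]
  unfold Phi Uu
  rw [RCLike.ofReal_real_eq_id, Function.id_comp]
  rfl

lemma A_mul_Phi (v : Fin p → ℝ) : A * Phi hA v = Phi hA (hA.eigenvalues * v) := by
  conv_lhs => enter [1]; rw [← Phi_eigenvalues hA]
  rw [Phi_mul]

lemma Phi_transpose (v : Fin p → ℝ) : (Phi hA v)ᵀ = Phi hA v := by
  unfold Phi
  have h1 : star (Uu hA) = (Uu hA)ᵀ := by
    rw [Matrix.star_eq_conjTranspose, conjTranspose_eq_transpose_of_trivial]
  rw [Matrix.transpose_mul, Matrix.transpose_mul, h1, transpose_transpose,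
    diagonal_transpose, Matrix.mul_assoc]

lemma Phi_inv (v : Fin p → ℝ) (hv : ∀ i, v i ≠ 0) : (Phi hA v)⁻¹ = Phi hA v⁻¹ := by
  apply Matrix.inv_eq_right_inv
  rw [Phi_mul]
  have : v * v⁻¹ = 1 := by
    funext i
    exact mul_inv_cancel₀ (hv i)
  rw [this, Phi_one]

lemma Phi_exp (v : Fin p → ℝ) :
    NormedSpace.exp (Phi hA v) = Phi hA (fun i => Real.exp (v i)) := by
  have hUnit : IsUnit (Uu hA) := isUnit_iff_exists.2 ⟨star (Uu hA), Uu_mul_star hA, star_mul_Uu hA⟩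
  have hinv : (Uu hA)⁻¹ = star (Uu hA) := Matrix.inv_eq_right_inv (Uu_mul_star hA)
  unfold Phi
  rw [← hinv, Matrix.exp_conj _ _ hUnit, Matrix.exp_diagonal]
  congr 2
  funext i
  rw [Pi.exp_def, Real.exp_eq_exp_ℝ]

lemma Phi_tendsto {α : Type*} {l : Filter α} {vf : α → Fin p → ℝ} {v : Fin p → ℝ}
    (hv : Filter.Tendsto vf l (nhds v)) :
    Filter.Tendsto (fun δ => Phi hA (vf δ)) l (nhds (Phi hA v)) := by
  have hc : Continuous fun w : Fin p → ℝ => Phi hA w := by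
    unfold Phi
    exact (continuous_const.matrix_mul (continuous_id.matrix_diagonal)).matrix_mul
      continuous_const
  exact (hc.tendsto v).comp hv

end GFProof

section Main

open GFProof

variable {n p : ℕ} (X : Matrix (Fin n) (Fin p) ℝ)

lemma M_herm : (Xᵀ * X).IsHermitian := by
  have := Matrix.isHermitian_conjTranspose_mul_self X
  simpa [Matrix.conjTranspose_eq_transpose_of_trivial] using this

lemma M_transpose : (Xᵀ * X)ᵀ = Xᵀ * X := by
  rw [Matrix.transpose_mul, Matrix.transpose_transpose]

lemma moorePenrose_M_eq :
    moorePenrose (Xᵀ * X) = Phi (M_herm X) (fun i => ((M_herm X).eigenvalues i)⁻¹) := by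
  set hM := M_herm X
  set d := hM.eigenvalues with hd
  apply Filter.Tendsto.limUnder_eq
  have key : ∀ δ ∈ Set.Ioi (0:ℝ),
      ((Xᵀ * X)ᵀ * (Xᵀ * X) + δ • (1 : Matrix (Fin p) (Fin p) ℝ))⁻¹ * (Xᵀ * X)ᵀ
        = Phi hM (fun i => d i / (d i ^ 2 + δ)) := by
    intro δ hδ
    rw [Set.mem_Ioi] at hδ
    have hMd : Xᵀ * X = Phi hM d := (Phi_eigenvalues hM).symm
    rw [M_transpose]
    conv_lhs => rw [hMd]
    rw [Phi_mul]
    have h1 : δ • (1 : Matrix (Fin p) (Fin p) ℝ) = Phi hM (fun _ => δ) := by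
      have : (fun _ : Fin p => δ) = δ • (1 : Fin p → ℝ) := by funext i; simp
      rw [this, Phi_smul, Phi_one]
    rw [h1, ← Phi_add]
    have hne : ∀ i, (d * d + fun _ : Fin p => δ) i ≠ 0 := by
      intro i
      have : 0 < d i * d i + δ := add_pos_of_nonneg_of_pos (mul_self_nonneg _) hδ
      simpa using this.ne'
    rw [Phi_inv _ _ hne, Phi_mul]
    have harg : (d * d + fun _ : Fin p => δ)⁻¹ * d = fun i => d i / (d i ^ 2 + δ) := by
      funext i
      simp only [Pi.mul_apply, Pi.inv_apply, Pi.add_apply]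
      rw [div_eq_inv_mul, sq]
    rw [harg]
  have heq : (fun δ => Phi hM (fun i => d i / (d i ^ 2 + δ)))
      =ᶠ[nhdsWithin (0:ℝ) (Set.Ioi 0)]
      (fun δ => ((Xᵀ * X)ᵀ * (Xᵀ * X) + δ • (1 : Matrix (Fin p) (Fin p) ℝ))⁻¹ * (Xᵀ * X)ᵀ) := by
    filter_upwards [self_mem_nhdsWithin] with δ hδ
    exact (key δ hδ).symm
  apply Filter.Tendsto.congr' heq
  apply Phi_tendsto
  rw [tendsto_pi_nhds]
  intro i
  rcases eq_or_ne (d i) 0 with h0 | h0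
  · simp only [h0, zero_div, _root_.inv_zero]
    exact tendsto_const_nhds
  · have hcont : ContinuousAt (fun δ : ℝ => d i / (d i ^ 2 + δ)) 0 := by
      apply ContinuousAt.div continuousAt_const (continuousAt_const.add continuousAt_id)
      simpa using pow_ne_zero 2 h0
    have h2 : d i / (d i ^ 2 + 0) = (d i)⁻¹ := by
      field_simp
      ring
    have h3 : Filter.Tendsto (fun δ : ℝ => d i / (d i ^ 2 + δ))
        (nhdsWithin (0:ℝ) (Set.Ioi 0)) (nhds (d i / (d i ^ 2 + 0))) :=
      hcont.continuousWithinAt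
    rwa [h2] at h3

lemma proj_zero (v : Fin p → ℝ)
    (hv : ∀ i, v i * (M_herm X).eigenvalues i = 0) :
    Phi (M_herm X) v * Xᵀ = 0 := by
  set hM := M_herm X
  set K := Phi hM v * Xᵀ with hK
  have hKT : Kᵀ = X * Phi hM v := by
    rw [hK, Matrix.transpose_mul, Matrix.transpose_transpose, Phi_transpose]
  have h0 : K * Kᵀ = 0 := by
    rw [hKT, hK, Matrix.mul_assoc, ← Matrix.mul_assoc Xᵀ X (Phi hM v),
      A_mul_Phi hM, Phi_mul]
    have : v * (hM.eigenvalues * v) = 0 := by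
      funext i
      simp only [Pi.mul_apply, Pi.zero_apply]
      rw [← mul_assoc, hv i, zero_mul]
    rw [this, Phi_zero]
  have hKT0 : Kᵀ = 0 := by
    apply Matrix.conjTranspose_mul_self_eq_zero.mp
    rw [Matrix.conjTranspose_eq_transpose_of_trivial, Matrix.transpose_transpose, h0]
  rw [← Matrix.transpose_transpose K, hKT0, Matrix.transpose_zero]

lemma betaGF_eq (y : Fin n → ℝ) (t : ℝ) :
    betaGF X y t =
      (Phi (M_herm X) (fun i => ((M_herm X).eigenvalues i)⁻¹ *
          (1 - Real.exp (-(t * (n : ℝ)⁻¹) * (M_herm X).eigenvalues i))) * Xᵀ) *ᵥ y := by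
  set hM := M_herm X
  set d := hM.eigenvalues with hd
  unfold betaGF
  rw [moorePenrose_M_eq]
  have hexp : -(t • ((n : ℝ)⁻¹ • (Xᵀ * X))) = Phi hM ((-(t * (n : ℝ)⁻¹)) • d) := by
    rw [Phi_smul, Phi_eigenvalues, smul_smul, neg_smul]
  have hform : Phi hM (fun i => (d i)⁻¹) *
      ((1 : Matrix (Fin p) (Fin p) ℝ) -
        NormedSpace.exp (-(t • ((n : ℝ)⁻¹ • (Xᵀ * X))))) =
      Phi hM (fun i => (d i)⁻¹ * (1 - Real.exp (-(t * (n : ℝ)⁻¹) * d i))) := by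
    rw [hexp, Phi_exp, ← Phi_one hM, ← Phi_sub, Phi_mul]
    have harg : ((fun i => (d i)⁻¹) * (1 - fun i => Real.exp (((-(t * (n:ℝ)⁻¹)) • d) i)))
        = fun i => (d i)⁻¹ * (1 - Real.exp (-(t * (n:ℝ)⁻¹) * d i)) := by
      funext i
      simp [smul_eq_mul]
    rw [harg]
  rw [hform]

lemma hasDerivAt_main (y : Fin n → ℝ) (t : ℝ) :
    HasDerivAt
      (fun s => (Phi (M_herm X) (fun i => ((M_herm X).eigenvalues i)⁻¹ *
          (1 - Real.exp (-(s * (n : ℝ)⁻¹) * (M_herm X).eigenvalues i))) * Xᵀ) *ᵥ y)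
      ((Phi (M_herm X) (fun i => ((M_herm X).eigenvalues i)⁻¹ *
          ((n : ℝ)⁻¹ * (M_herm X).eigenvalues i *
            Real.exp (-(t * (n : ℝ)⁻¹) * (M_herm X).eigenvalues i))) * Xᵀ) *ᵥ y) t := by
  set hM := M_herm X
  set d := hM.eigenvalues with hd
  set w : Fin p → ℝ := star (Uu hM) *ᵥ (Xᵀ *ᵥ y) with hw
  have hrw : ∀ (v : Fin p → ℝ),
      (Phi hM v * Xᵀ) *ᵥ y = (Uu hM) *ᵥ (fun i => v i * w i) := by
    intro v
    have h1 : (fun i => v i * w i) = diagonal v *ᵥ w := by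
      funext i
      exact (Matrix.mulVec_diagonal v w i).symm
    rw [h1, hw, Matrix.mulVec_mulVec, Matrix.mulVec_mulVec, Matrix.mulVec_mulVec]
    unfold Phi
    rfl
  simp only [hrw]
  set L : (Fin p → ℝ) →L[ℝ] (Fin p → ℝ) :=
    LinearMap.toContinuousLinearMap (Matrix.mulVecLin (Uu hM)) with hL
  have hLrw : ∀ z : Fin p → ℝ, (Uu hM) *ᵥ z = L z := fun z => rfl
  have hF : HasDerivAt
      (fun s => (fun i => ((d i)⁻¹ * (1 - Real.exp (-(s * (n : ℝ)⁻¹) * d i))) * w i))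
      (fun i => ((d i)⁻¹ * ((n : ℝ)⁻¹ * d i * Real.exp (-(t * (n : ℝ)⁻¹) * d i))) * w i)
      t := by
    rw [hasDerivAt_pi]
    intro i
    have h1 : HasDerivAt (fun s : ℝ => -(s * (n : ℝ)⁻¹) * d i)
        (-(1 * (n : ℝ)⁻¹) * d i) t :=
      (((hasDerivAt_id t).mul_const ((n : ℝ)⁻¹)).neg).mul_const (d i)
    have h2 := h1.exp
    have h3 := h2.const_sub 1
    have h4 := (h3.const_mul ((d i)⁻¹)).mul_const (w i)
    convert h4 using 1
    · rfl
    ring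
  have := (L.hasFDerivAt (x := (fun i => ((d i)⁻¹ *
      (1 - Real.exp (-(t * (n : ℝ)⁻¹) * d i))) * w i))).comp_hasDerivAt t hF
  exact this

end Main

end GFProof

open GFProof in
/-- `β̂gf(0) = 0` and for every `t ≥ 0`, the derivative of `β̂gf` at `t`
exists and equals `(1/n) Xᵀ (y − X β̂gf(t))`, i.e. `β̂gf` solves the gradient flow
differential equation for the least squares loss `(1/2n)‖y − Xβ‖₂²`. -/
theorem stmt_0 {n p : ℕ} (hn : 0 < n) (hp : 0 < p)
    (X : Matrix (Fin n) (Fin p) ℝ) (y : Fin n → ℝ) :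
    betaGF X y 0 = 0 ∧
      ∀ t : ℝ, 0 ≤ t →
        HasDerivAt (betaGF X y) ((n : ℝ)⁻¹ • (Xᵀ *ᵥ (y - X *ᵥ betaGF X y t))) t := by
  constructor
  · simp [betaGF, NormedSpace.exp_zero]
  · intro t ht
    set hM := M_herm X with hhM
    set d := hM.eigenvalues with hd
    set ft : Fin p → ℝ := fun i => (d i)⁻¹ * (1 - Real.exp (-(t * (n : ℝ)⁻¹) * d i)) with hft
    set f' : Fin p → ℝ := fun i => (d i)⁻¹ *
        ((n : ℝ)⁻¹ * d i * Real.exp (-(t * (n : ℝ)⁻¹) * d i)) with hf'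
    have hfun : betaGF X y = fun s =>
        (Phi hM (fun i => (d i)⁻¹ *
          (1 - Real.exp (-(s * (n : ℝ)⁻¹) * d i))) * Xᵀ) *ᵥ y :=
      funext (betaGF_eq X y)
    have hder := hasDerivAt_main X y t
    -- now show the claimed derivative value equals the one in hder
    have hval : (n : ℝ)⁻¹ • (Xᵀ *ᵥ (y - X *ᵥ betaGF X y t)) =
        (Phi hM f' * Xᵀ) *ᵥ y := by
      have hβ : betaGF X y t = (Phi hM ft * Xᵀ) *ᵥ y := betaGF_eq X y t
      rw [hβ, Matrix.mulVec_sub, Matrix.mulVec_mulVec, Matrix.mulVec_mulVec]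
      have h1 : Xᵀ * X * (Phi hM ft * Xᵀ) = Phi hM (d * ft) * Xᵀ := by
        rw [← Matrix.mul_assoc, A_mul_Phi hM, ← hd]
      rw [h1]
      have h2 : Xᵀ *ᵥ y = (Phi hM 1 * Xᵀ) *ᵥ y := by
        rw [Phi_one, Matrix.one_mul]
      rw [h2, ← Matrix.sub_mulVec, ← Matrix.sub_mul, ← Phi_sub,
        ← Matrix.smul_mulVec, ← Matrix.smul_mul, ← Phi_smul]
      have h3 : Phi hM ((n : ℝ)⁻¹ • (1 - d * ft)) * Xᵀ
          = Phi hM f' * Xᵀ := by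
        have h4 : Phi hM ((n : ℝ)⁻¹ • (1 - d * ft) - f') * Xᵀ = 0 := by
          apply proj_zero
          intro i
          rw [← hd]
          simp only [hft, hf', Pi.sub_apply, Pi.smul_apply, Pi.one_apply, Pi.mul_apply,
            smul_eq_mul]
          rcases eq_or_ne (d i) 0 with h0 | h0
          · rw [h0]; ring
          · field_simp
            try ring
        rw [Phi_sub, Matrix.sub_mul, sub_eq_zero] at h4
        exact h4
      rw [h3]
    rw [hval, hfun]
    exact hder
end

section
/- Let A be a real symmetric positive semidefinite p×p matrix, t ≥ 0 and v ∈ ℝᵖ. Then ‖exp(−tA) v‖₂ ≤ ‖(I + tA)⁻¹ v‖₂. (This is the deterministic core of the statement that the squared bias of gradient flow at time t is at most the squared bias of ridge regression with tuning parameter λ = 1/t: the gradient flow bias vector is exp(−tΣ̂)β₀ and the ridge bias vector is (I + tΣ̂)⁻¹β₀.) -/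
open Matrix

/-- The Euclidean norm on `ℝᵖ`. -/
noncomputable def l2norm {p : ℕ} (v : Fin p → ℝ) : ℝ :=
  Real.sqrt (∑ i, v i ^ 2)

lemma aux_sum_sq_mulVec {p : ℕ} (U : Matrix (Fin p) (Fin p) ℝ)
    (hUtU : Uᵀ * U = 1) (x : Fin p → ℝ) :
    ∑ i, (U *ᵥ x) i ^ 2 = ∑ i, x i ^ 2 := by
  have h : (U *ᵥ x) ⬝ᵥ (U *ᵥ x) = x ⬝ᵥ x := by
    calc (U *ᵥ x) ⬝ᵥ (U *ᵥ x) = ((U *ᵥ x) ᵥ* U) ⬝ᵥ x := dotProduct_mulVec _ _ _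
      _ = (Uᵀ *ᵥ (U *ᵥ x)) ⬝ᵥ x := by rw [← Matrix.mulVec_transpose]
      _ = ((Uᵀ * U) *ᵥ x) ⬝ᵥ x := by rw [Matrix.mulVec_mulVec]
      _ = x ⬝ᵥ x := by rw [hUtU, Matrix.one_mulVec]
  simpa [dotProduct, sq] using h

/-- For a real symmetric positive semidefinite `p × p` matrix `A`, `t ≥ 0`
and `v ∈ ℝᵖ`, `‖exp(−tA) v‖₂ ≤ ‖(I + tA)⁻¹ v‖₂`. -/
theorem stmt_2 {p : ℕ} (A : Matrix (Fin p) (Fin p) ℝ) (hA : A.PosSemidef)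
    (t : ℝ) (ht : 0 ≤ t) (v : Fin p → ℝ) :
    l2norm ((NormedSpace.exp (-(t • A))) *ᵥ v) ≤
      l2norm (((1 : Matrix (Fin p) (Fin p) ℝ) + t • A)⁻¹ *ᵥ v) := by
  classical
  have hH : A.IsHermitian := hA.1
  set U : Matrix (Fin p) (Fin p) ℝ := (hH.eigenvectorUnitary : Matrix (Fin p) (Fin p) ℝ) with hUdef
  set d : Fin p → ℝ := hH.eigenvalues with hddef
  have hdnn : ∀ i, 0 ≤ d i := fun i => hA.eigenvalues_nonneg i
  have hpos : ∀ i, 0 < 1 + t * d i := fun i =>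
    add_pos_of_pos_of_nonneg one_pos (mul_nonneg ht (hdnn i))
  have hUU : star U * U = 1 := (Unitary.mem_iff.mp hH.eigenvectorUnitary.2).1
  have hUU' : U * star U = 1 := (Unitary.mem_iff.mp hH.eigenvectorUnitary.2).2
  have hstar : star U = Uᵀ := by
    rw [Matrix.star_eq_conjTranspose, Matrix.conjTranspose_eq_transpose_of_trivial]
  have hUtU : Uᵀ * U = 1 := by rw [← hstar]; exact hUU
  have hinv : U⁻¹ = star U := Matrix.inv_eq_left_inv hUU
  have hcoe : (RCLike.ofReal ∘ d : Fin p → ℝ) = d := by ext i; simp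
  have hspec : A = U * Matrix.diagonal d * star U := by
    have := hH.spectral_theorem
    rwa [hcoe] at this
  -- exponential
  have hexp : NormedSpace.exp (-(t • A))
      = U * Matrix.diagonal (fun i => Real.exp (-(t * d i))) * star U := by
    have h1 : -(t • A) = U * Matrix.diagonal (fun i => -(t * d i)) * star U := by
      rw [hspec]
      rw [show Matrix.diagonal (fun i => -(t * d i)) = -(t • Matrix.diagonal d) by
        rw [← Matrix.diagonal_smul, ← Matrix.diagonal_neg]; rfl]
      simp [Matrix.mul_smul, Matrix.smul_mul, Matrix.neg_mul, Matrix.mul_neg]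
    have hUunit : IsUnit U := ⟨⟨U, star U, hUU', hUU⟩, rfl⟩
    have hpe : (NormedSpace.exp fun i => -(t * d i)) = fun i => Real.exp (-(t * d i)) := by
      ext i; rw [Pi.coe_exp, ← Real.exp_eq_exp_ℝ]
    rw [h1, ← hinv, Matrix.exp_conj U _ hUunit, Matrix.exp_diagonal, hpe, hinv]
  -- inverse
  have hone : (1 : Matrix (Fin p) (Fin p) ℝ) + t • A
      = U * Matrix.diagonal (fun i => 1 + t * d i) * star U := by
    rw [hspec]
    rw [show Matrix.diagonal (fun i => 1 + t * d i)
        = 1 + t • Matrix.diagonal d by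
      rw [← Matrix.diagonal_smul, ← Matrix.diagonal_one, ← Matrix.diagonal_add]; rfl]
    rw [Matrix.mul_add, Matrix.add_mul, Matrix.mul_one, hUU']
    simp [Matrix.mul_smul, Matrix.smul_mul]
  have hinv2 : ((1 : Matrix (Fin p) (Fin p) ℝ) + t • A)⁻¹
      = U * Matrix.diagonal (fun i => (1 + t * d i)⁻¹) * star U := by
    apply Matrix.inv_eq_right_inv
    rw [hone]
    calc (U * Matrix.diagonal (fun i => 1 + t * d i) * star U) *
          (U * Matrix.diagonal (fun i => (1 + t * d i)⁻¹) * star U)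
        = U * (Matrix.diagonal (fun i => 1 + t * d i) * ((star U * U) *
            Matrix.diagonal (fun i => (1 + t * d i)⁻¹))) * star U := by
          simp only [Matrix.mul_assoc]
      _ = U * (Matrix.diagonal (fun i => 1 + t * d i) *
            Matrix.diagonal (fun i => (1 + t * d i)⁻¹)) * star U := by rw [hUU, Matrix.one_mul]
      _ = 1 := by
          rw [Matrix.diagonal_mul_diagonal]
          rw [show (fun i => (1 + t * d i) * (1 + t * d i)⁻¹) = fun _ => (1 : ℝ) by
            ext i; exact mul_inv_cancel₀ (hpos i).ne']
          rw [Matrix.diagonal_one, Matrix.mul_one, hUU']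
  -- reduce using w = star U *ᵥ v
  set w : Fin p → ℝ := star U *ᵥ v with hwdef
  have key : ∀ f : Fin p → ℝ,
      (U * Matrix.diagonal f * star U) *ᵥ v = U *ᵥ (fun i => f i * w i) := by
    intro f
    have h2 : Matrix.diagonal f *ᵥ w = fun i => f i * w i := by
      ext i; simp [Matrix.mulVec_diagonal]
    rw [Matrix.mul_assoc, ← Matrix.mulVec_mulVec, ← Matrix.mulVec_mulVec, ← hwdef, h2]
  rw [hexp, hinv2, key, key]
  unfold l2norm
  rw [aux_sum_sq_mulVec U hUtU, aux_sum_sq_mulVec U hUtU]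
  apply Real.sqrt_le_sqrt
  apply Finset.sum_le_sum
  intro i _
  have hle : Real.exp (-(t * d i)) ≤ (1 + t * d i)⁻¹ := by
    rw [Real.exp_neg]
    rw [inv_le_inv₀ (Real.exp_pos _) (hpos i)]
    have := Real.add_one_le_exp (t * d i)
    linarith
  calc (Real.exp (-(t * d i)) * w i) ^ 2
      = Real.exp (-(t * d i)) ^ 2 * w i ^ 2 := by ring
    _ ≤ ((1 + t * d i)⁻¹) ^ 2 * w i ^ 2 := by
        apply mul_le_mul_of_nonneg_right _ (sq_nonneg _)
        exact pow_le_pow_left₀ (Real.exp_pos _).le hle 2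
    _ = ((1 + t * d i)⁻¹ * w i) ^ 2 := by ring
end

section
/- Fix y ∈ ℝⁿ, a real n×p matrix X, β ∈ ℝᵖ, and reals ε > 0, m > 0. Let h(β) = y − Xβ be the residual vector, F(β) = diag(h(β))² the diagonal matrix of squared residuals, Σ̂ = XᵀX/n, L = λ_max(Σ̂), and Q = (ε/(nm)) Xᵀ F(β) X. Then tr[(Q^{1/2} − ((ε/m)·Σ̂)^{1/2})²] ≤ (4 L p² ε/m) · Σ_{i=1}^n |h(β)_i² − 1|, where M^{1/2} denotes the positive semidefinite square root of a positive semidefinite matrix M. -/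
open Matrix RealInnerProductSpace

section
open scoped ComplexOrder

/-- The positive semidefinite square root of a positive semidefinite matrix (as in the older Mathlib,
where it was `Matrix.PosSemidef.sqrt`; it has since been removed). -/
noncomputable def Matrix.PosSemidef.sqrt {n 𝕜 : Type*} [Fintype n] [DecidableEq n] [RCLike 𝕜]
    {A : Matrix n n 𝕜} (hA : A.PosSemidef) : Matrix n n 𝕜 :=
  hA.1.eigenvectorUnitary.1 * diagonal ((↑) ∘ (√·) ∘ hA.1.eigenvalues) *
    (star hA.1.eigenvectorUnitary : Matrix n n 𝕜)

end

theorem Matrix.PosSemidef.posSemidef_sqrt {p : ℕ} {A : Matrix (Fin p) (Fin p) ℝ}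
    (hA : A.PosSemidef) : hA.sqrt.PosSemidef := by
  unfold Matrix.PosSemidef.sqrt
  have hd : (diagonal (RCLike.ofReal ∘ (fun x => √x) ∘ hA.1.eigenvalues) :
      Matrix (Fin p) (Fin p) ℝ).PosSemidef :=
    posSemidef_diagonal_iff.mpr fun i => Real.sqrt_nonneg _
  have := hd.mul_mul_conjTranspose_same (hA.1.eigenvectorUnitary : Matrix (Fin p) (Fin p) ℝ)
  rw [← star_eq_conjTranspose] at this
  exact this

theorem Matrix.PosSemidef.sqrt_mul_self {p : ℕ} {A : Matrix (Fin p) (Fin p) ℝ}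
    (hA : A.PosSemidef) : hA.sqrt * hA.sqrt = A := by
  set U : Matrix (Fin p) (Fin p) ℝ := (hA.1.eigenvectorUnitary : Matrix (Fin p) (Fin p) ℝ) with hU
  have h1 : star U * U = 1 := Unitary.coe_star_mul_self _
  have h2 : A = U * Matrix.diagonal (RCLike.ofReal ∘ hA.1.eigenvalues) * star U :=
    hA.1.spectral_theorem
  set E : Matrix (Fin p) (Fin p) ℝ := diagonal (fun i => √(hA.1.eigenvalues i)) with hE
  have hEE : E * E = Matrix.diagonal (RCLike.ofReal ∘ hA.1.eigenvalues) := by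
    rw [hE, diagonal_mul_diagonal]
    congr 1
    funext i
    simp [Real.mul_self_sqrt (hA.eigenvalues_nonneg i)]
  have hs : hA.sqrt = U * E * star U := rfl
  rw [hs]
  conv_rhs => rw [h2, ← hEE]
  calc U * E * star U * (U * E * star U) = U * E * (star U * U) * E * star U := by
        simp only [mul_assoc]
    _ = U * (E * E) * star U := by rw [h1, mul_one]; simp only [mul_assoc]

private lemma stmt7_trace_sq {p : ℕ} {M : Matrix (Fin p) (Fin p) ℝ} (hM : M.IsHermitian) :
    (M ^ 2).trace = ∑ i, hM.eigenvalues i ^ 2 := by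
  set U : Matrix (Fin p) (Fin p) ℝ := (hM.eigenvectorUnitary : Matrix (Fin p) (Fin p) ℝ) with hU
  set d : Matrix (Fin p) (Fin p) ℝ := Matrix.diagonal (RCLike.ofReal ∘ hM.eigenvalues) with hd
  have h1 : star U * U = 1 := Unitary.coe_star_mul_self _
  have h2 : M = U * d * star U := hM.spectral_theorem
  calc (M ^ 2).trace = ((U * d * star U) * (U * d * star U)).trace := by rw [← h2, pow_two]
    _ = (U * (d * ((star U * U) * (d * star U)))).trace := by simp only [mul_assoc]
    _ = (U * (d * (d * star U))).trace := by rw [h1, one_mul]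
    _ = ((d * (d * star U)) * U).trace := trace_mul_comm _ _
    _ = ((d * d) * (star U * U)).trace := by simp only [mul_assoc]
    _ = (d * d).trace := by rw [h1, mul_one]
    _ = ∑ i, hM.eigenvalues i ^ 2 := by
        rw [hd, diagonal_mul_diagonal, trace_diagonal]
        simp [pow_two]

private lemma stmt7_rayleigh {p : ℕ} {M : Matrix (Fin p) (Fin p) ℝ} (hM : M.PosSemidef) (L : ℝ)
    (hLe : ∀ i, hM.1.eigenvalues i ≤ L) (v : Fin p → ℝ) :
    v ⬝ᵥ (M *ᵥ v) ≤ L * (v ⬝ᵥ v) := by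
  set U : Matrix (Fin p) (Fin p) ℝ := (hM.1.eigenvectorUnitary : Matrix (Fin p) (Fin p) ℝ) with hU
  have h1 : U * star U = 1 := Unitary.coe_mul_star_self _
  have h2 : M = U * Matrix.diagonal (RCLike.ofReal ∘ hM.1.eigenvalues) * star U :=
    hM.1.spectral_theorem
  have hdec : L • (1 : Matrix (Fin p) (Fin p) ℝ) - M
      = U * Matrix.diagonal (fun i => L - hM.1.eigenvalues i) * Uᴴ := by
    rw [← star_eq_conjTranspose]
    have h3 : L • (1 : Matrix (Fin p) (Fin p) ℝ) = U * (L • 1) * star U := by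
      rw [mul_smul_comm, mul_one, smul_mul_assoc, h1]
    calc L • (1 : Matrix (Fin p) (Fin p) ℝ) - M
        = U * (L • 1) * star U - U * Matrix.diagonal (RCLike.ofReal ∘ hM.1.eigenvalues) * star U :=
          by rw [← h3, ← h2]
      _ = U * ((L • 1) - Matrix.diagonal (RCLike.ofReal ∘ hM.1.eigenvalues)) * star U := by
          rw [mul_sub, sub_mul]
      _ = U * Matrix.diagonal (fun i => L - hM.1.eigenvalues i) * star U := by
          rw [smul_one_eq_diagonal, diagonal_sub]
          rfl
  have hpsd : (L • (1 : Matrix (Fin p) (Fin p) ℝ) - M).PosSemidef := by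
    rw [hdec]
    exact (posSemidef_diagonal_iff.mpr fun i => sub_nonneg.mpr (hLe i)).mul_mul_conjTranspose_same U
  have := hpsd.dotProduct_mulVec_nonneg v
  simp only [star_trivial, sub_mulVec, dotProduct_sub, smul_mulVec, one_mulVec,
    dotProduct_smul, smul_eq_mul] at this
  linarith

private lemma stmt7_eig_sq_le {p : ℕ} {A B : Matrix (Fin p) (Fin p) ℝ}
    (hA : A.PosSemidef) (hB : B.PosSemidef)
    (v : Fin p → ℝ) (hv : v ⬝ᵥ v = 1) (μ : ℝ)
    (hμ : (hA.sqrt - hB.sqrt) *ᵥ v = μ • v) :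
    μ ^ 2 ≤ max (v ⬝ᵥ ((A - B) *ᵥ v)) (v ⬝ᵥ ((B - A) *ᵥ v)) := by
  set a := hA.sqrt with ha
  set b := hB.sqrt with hb
  have hav : a *ᵥ v = b *ᵥ v + μ • v := by
    rw [sub_mulVec] at hμ
    linear_combination (norm := module) hμ
  have symm_form : ∀ (C : Matrix (Fin p) (Fin p) ℝ), C.IsHermitian →
      ∀ w : Fin p → ℝ, w ⬝ᵥ ((C * C) *ᵥ w) = (C *ᵥ w) ⬝ᵥ (C *ᵥ w) := by
    intro C hC w
    have hCt : Cᵀ = C := by rw [← conjTranspose_eq_transpose_of_trivial]; exact hC.eq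
    rw [← mulVec_mulVec, dotProduct_mulVec, ← hCt, vecMul_transpose, hCt]
  have hAv : v ⬝ᵥ (A *ᵥ v) = (a *ᵥ v) ⬝ᵥ (a *ᵥ v) := by
    rw [← hA.sqrt_mul_self]; exact symm_form a hA.posSemidef_sqrt.1 v
  have hBv : v ⬝ᵥ (B *ᵥ v) = (b *ᵥ v) ⬝ᵥ (b *ᵥ v) := by
    rw [← hB.sqrt_mul_self]; exact symm_form b hB.posSemidef_sqrt.1 v
  have ht : 0 ≤ v ⬝ᵥ (b *ᵥ v) := by simpa using hB.posSemidef_sqrt.dotProduct_mulVec_nonneg v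
  have hs : 0 ≤ v ⬝ᵥ (a *ᵥ v) := by simpa using hA.posSemidef_sqrt.dotProduct_mulVec_nonneg v
  have expand : v ⬝ᵥ (A *ᵥ v) = v ⬝ᵥ (B *ᵥ v) + 2 * μ * (v ⬝ᵥ (b *ᵥ v)) + μ ^ 2 := by
    rw [hAv, hBv, hav]
    simp only [dotProduct_add, add_dotProduct, dotProduct_smul, smul_dotProduct, smul_eq_mul, hv]
    rw [dotProduct_comm (b *ᵥ v) v]
    ring
  have key1 : v ⬝ᵥ ((A - B) *ᵥ v) = 2 * μ * (v ⬝ᵥ (b *ᵥ v)) + μ ^ 2 := by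
    rw [sub_mulVec, dotProduct_sub, expand]; ring
  have hva : v ⬝ᵥ (a *ᵥ v) = v ⬝ᵥ (b *ᵥ v) + μ := by
    rw [hav]; simp [dotProduct_add, dotProduct_smul, hv]
  have key2 : v ⬝ᵥ ((B - A) *ᵥ v) = -2 * μ * (v ⬝ᵥ (a *ᵥ v)) + μ ^ 2 := by
    rw [sub_mulVec, dotProduct_sub, expand, hva]; ring
  rcases le_or_gt 0 μ with h | h
  · refine le_trans ?_ (le_max_left _ _)
    rw [key1]; nlinarith
  · refine le_trans ?_ (le_max_right _ _)
    rw [key2]; nlinarith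

/-- with `h(β) = y − Xβ`, `F(β) = diag(h(β))²`, `Σ̂ = XᵀX/n`,
`L = λ_max(Σ̂)` and `Q = (ε/(nm)) Xᵀ F(β) X`, we have
`tr[(Q^{1/2} − ((ε/m)Σ̂)^{1/2})²] ≤ (4 L p² ε/m) · Σᵢ |h(β)ᵢ² − 1|`. -/
theorem stmt_7 {n p : ℕ} (y : Fin n → ℝ) (X : Matrix (Fin n) (Fin p) ℝ)
    (β : Fin p → ℝ) (ε m : ℝ) (hε : 0 < ε) (hm : 0 < m) (L : ℝ)
    (hL : L ∈ spectrum ℝ ((n : ℝ)⁻¹ • (Xᵀ * X)) ∧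
      ∀ s ∈ spectrum ℝ ((n : ℝ)⁻¹ • (Xᵀ * X)), s ≤ L)
    (hQ : ((ε / ((n : ℝ) * m)) •
        (Xᵀ * Matrix.diagonal (fun i => (y i - (X *ᵥ β) i) ^ 2) * X)).PosSemidef)
    (hS : ((ε / m) • ((n : ℝ)⁻¹ • (Xᵀ * X))).PosSemidef) :
    ((hQ.sqrt - hS.sqrt) ^ 2).trace ≤
      4 * L * (p : ℝ) ^ 2 * ε / m * ∑ i, |(y i - (X *ᵥ β) i) ^ 2 - 1| := by
  classical
  set h : Fin n → ℝ := fun i => y i - (X *ᵥ β) i with hdefh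
  set T : ℝ := ∑ i, |h i ^ 2 - 1| with hT
  have hT0 : 0 ≤ T := Finset.sum_nonneg fun i _ => abs_nonneg _
  set Qm : Matrix (Fin p) (Fin p) ℝ :=
    (ε / ((n : ℝ) * m)) • (Xᵀ * Matrix.diagonal (fun i => h i ^ 2) * X) with hQm
  set Sm : Matrix (Fin p) (Fin p) ℝ := (ε / m) • ((n : ℝ)⁻¹ • (Xᵀ * X)) with hSm
  -- positive semidefiniteness of Σ̂
  have h0 : (Xᵀ * X).PosSemidef := by
    have := posSemidef_conjTranspose_mul_self X
    rwa [conjTranspose_eq_transpose_of_trivial] at this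
  have hSig : ((n : ℝ)⁻¹ • (Xᵀ * X)).PosSemidef := by
    rw [posSemidef_iff_dotProduct_mulVec]
    constructor
    · show ((n : ℝ)⁻¹ • (Xᵀ * X))ᴴ = _
      rw [conjTranspose_smul, h0.1.eq]
      simp
    · intro x
      have h1 := h0.dotProduct_mulVec_nonneg x
      simp only [smul_mulVec, dotProduct_smul, smul_eq_mul]
      have : (0:ℝ) ≤ ((n : ℝ))⁻¹ := by positivity
      exact mul_nonneg this h1
  have hLe : ∀ i, hSig.1.eigenvalues i ≤ L := fun i =>
    hL.2 _ (hSig.1.eigenvalues_mem_spectrum_real i)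
  obtain ⟨i0, hi0⟩ : L ∈ Set.range hSig.1.eigenvalues := by
    rw [← hSig.1.spectrum_real_eq_range_eigenvalues]; exact hL.1
  have hL0 : 0 ≤ L := hi0 ▸ hSig.eigenvalues_nonneg i0
  have hp1 : (1 : ℝ) ≤ (p : ℝ) := by exact_mod_cast i0.pos
  -- the quadratic-form bound
  have hc0 : 0 ≤ ε / ((n : ℝ) * m) := by positivity
  have hform : ∀ v : Fin p → ℝ, v ⬝ᵥ v = 1 →
      |v ⬝ᵥ ((Qm - Sm) *ᵥ v)| ≤ ε / m * (L * T) := by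
    intro v hv
    have hQS : Qm - Sm
        = (ε / ((n : ℝ) * m)) • (Xᵀ * (Matrix.diagonal (fun i => h i ^ 2) - 1) * X) := by
      rw [hQm, hSm, smul_smul]
      have hc : ε / m * ((n : ℝ))⁻¹ = ε / ((n : ℝ) * m) := by
        rw [div_eq_mul_inv, div_eq_mul_inv, mul_inv]; ring
      rw [hc, ← smul_sub]
      congr 1
      rw [Matrix.mul_sub, Matrix.mul_one, Matrix.sub_mul]
    set w : Fin n → ℝ := X *ᵥ v with hw
    have hform1 : v ⬝ᵥ ((Xᵀ * (Matrix.diagonal (fun i => h i ^ 2) - 1) * X) *ᵥ v)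
        = ∑ j, (h j ^ 2 - 1) * w j ^ 2 := by
      rw [← mulVec_mulVec, ← mulVec_mulVec, dotProduct_mulVec, vecMul_transpose]
      have hd1 : (Matrix.diagonal (fun i => h i ^ 2) - 1)
          = Matrix.diagonal (fun i => h i ^ 2 - 1) := by
        rw [← diagonal_one, diagonal_sub]
      rw [hd1, ← hw, dotProduct]
      refine Finset.sum_congr rfl fun j _ => ?_
      rw [mulVec_diagonal]
      ring
    have hwn : w ⬝ᵥ w = v ⬝ᵥ ((Xᵀ * X) *ᵥ v) := by
      symm; rw [← mulVec_mulVec, dotProduct_mulVec, vecMul_transpose]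
    have hray : v ⬝ᵥ (((n : ℝ)⁻¹ • (Xᵀ * X)) *ᵥ v) ≤ L := by
      have := stmt7_rayleigh hSig L hLe v
      rwa [hv, mul_one] at this
    have hwj : ∀ j, w j ^ 2 ≤ (n : ℝ) * L := by
      intro j
      have h1 : w j ^ 2 ≤ w ⬝ᵥ w := by
        rw [dotProduct]
        have : ∀ k ∈ Finset.univ, (0:ℝ) ≤ w k * w k := fun k _ => mul_self_nonneg _
        have := Finset.single_le_sum this (Finset.mem_univ j)
        nlinarith [this]
      have h2 : v ⬝ᵥ ((Xᵀ * X) *ᵥ v) ≤ (n : ℝ) * L := by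
        rcases Nat.eq_zero_or_pos n with hn | hn
        · subst hn
          have : v ⬝ᵥ ((Xᵀ * X) *ᵥ v) = w ⬝ᵥ w := hwn.symm
          rw [this, dotProduct]
          simp
        · have hne : ((n : ℝ)) ≠ 0 := by positivity
          have hexp : v ⬝ᵥ (((n : ℝ)⁻¹ • (Xᵀ * X)) *ᵥ v)
              = (n : ℝ)⁻¹ * (v ⬝ᵥ ((Xᵀ * X) *ᵥ v)) := by
            rw [smul_mulVec, dotProduct_smul, smul_eq_mul]
          rw [hexp] at hray
          calc v ⬝ᵥ ((Xᵀ * X) *ᵥ v) = (n:ℝ) * ((n : ℝ)⁻¹ * (v ⬝ᵥ ((Xᵀ * X) *ᵥ v))) := by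
                field_simp
            _ ≤ (n:ℝ) * L := by
                have : (0:ℝ) ≤ (n:ℝ) := by positivity
                exact mul_le_mul_of_nonneg_left hray this
      calc w j ^ 2 ≤ w ⬝ᵥ w := h1
        _ = v ⬝ᵥ ((Xᵀ * X) *ᵥ v) := hwn
        _ ≤ (n : ℝ) * L := h2
    rw [hQS, smul_mulVec, dotProduct_smul, smul_eq_mul, abs_mul,
      abs_of_nonneg hc0, hform1]
    have habs : |∑ j, (h j ^ 2 - 1) * w j ^ 2| ≤ ∑ j, |h j ^ 2 - 1| * ((n:ℝ) * L) := by
      calc |∑ j, (h j ^ 2 - 1) * w j ^ 2| ≤ ∑ j, |(h j ^ 2 - 1) * w j ^ 2| :=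
            Finset.abs_sum_le_sum_abs _ _
        _ ≤ ∑ j, |h j ^ 2 - 1| * ((n:ℝ) * L) := by
            refine Finset.sum_le_sum fun j _ => ?_
            rw [abs_mul, abs_of_nonneg (sq_nonneg (w j))]
            exact mul_le_mul_of_nonneg_left (hwj j) (abs_nonneg _)
    calc ε / ((n : ℝ) * m) * |∑ j, (h j ^ 2 - 1) * w j ^ 2|
        ≤ ε / ((n : ℝ) * m) * (∑ j, |h j ^ 2 - 1| * ((n:ℝ) * L)) :=
          mul_le_mul_of_nonneg_left habs hc0
      _ = ε / ((n : ℝ) * m) * ((n:ℝ) * L * T) := by rw [← Finset.sum_mul, hT]; ring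
      _ ≤ ε / m * (L * T) := by
          rcases Nat.eq_zero_or_pos n with hn | hn
          · subst hn
            simp only [Nat.cast_zero, zero_mul, mul_zero, zero_div]
            positivity
          · have hne : ((n : ℝ)) ≠ 0 := by positivity
            rw [div_mul_eq_mul_div, div_mul_eq_mul_div]
            rw [div_le_div_iff₀ (by positivity) (by positivity)]
            have hnp : (0:ℝ) < (n:ℝ) := by exact_mod_cast hn
            nlinarith [mul_nonneg (mul_nonneg hL0 hT0) hε.le, hnp]
  -- spectral decomposition of the difference of square roots
  have hD : (hQ.sqrt - hS.sqrt).IsHermitian := hQ.posSemidef_sqrt.1.sub hS.posSemidef_sqrt.1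
  rw [stmt7_trace_sq hD]
  have hbound : ∀ i, hD.eigenvalues i ^ 2 ≤ ε / m * (L * T) := by
    intro i
    set v : Fin p → ℝ := ⇑(hD.eigenvectorBasis i) with hvdef
    have hv : v ⬝ᵥ v = 1 := by
      have hnorm := hD.eigenvectorBasis.orthonormal.1 i
      have hinner : (inner ℝ (hD.eigenvectorBasis i) (hD.eigenvectorBasis i) : ℝ) = 1 := by
        rw [real_inner_self_eq_norm_mul_norm, hnorm]; norm_num
      rw [← hinner, EuclideanSpace.inner_eq_star_dotProduct]; rfl
    have hμ : (hQ.sqrt - hS.sqrt) *ᵥ v = hD.eigenvalues i • v := hD.mulVec_eigenvectorBasis i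
    have := stmt7_eig_sq_le hQ hS v hv _ hμ
    refine this.trans (max_le ?_ ?_)
    · have := hform v hv
      calc v ⬝ᵥ ((Qm - Sm) *ᵥ v) ≤ |v ⬝ᵥ ((Qm - Sm) *ᵥ v)| := le_abs_self _
        _ ≤ ε / m * (L * T) := this
    · have h1 : v ⬝ᵥ ((Sm - Qm) *ᵥ v) = -(v ⬝ᵥ ((Qm - Sm) *ᵥ v)) := by
        rw [show Sm - Qm = -(Qm - Sm) from (neg_sub Qm Sm).symm, neg_mulVec, dotProduct_neg]
      rw [h1]
      calc -(v ⬝ᵥ ((Qm - Sm) *ᵥ v)) ≤ |v ⬝ᵥ ((Qm - Sm) *ᵥ v)| := neg_le_abs _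
        _ ≤ ε / m * (L * T) := hform v hv
  calc ∑ i, hD.eigenvalues i ^ 2 ≤ ∑ _i : Fin p, ε / m * (L * T) :=
        Finset.sum_le_sum fun i _ => hbound i
    _ = (p : ℝ) * (ε / m * (L * T)) := by
        rw [Finset.sum_const, Finset.card_univ, Fintype.card_fin, nsmul_eq_mul]
    _ ≤ 4 * L * (p : ℝ) ^ 2 * ε / m * T := by
        have hm' : (0:ℝ) ≤ m⁻¹ := by positivity
        have c0 : 0 ≤ L * T * (ε * m⁻¹) :=
          mul_nonneg (mul_nonneg hL0 hT0) (mul_nonneg hε.le hm')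
        have e1 : (p:ℝ) * (ε / m * (L * T)) = (L * T * (ε * m⁻¹)) * (p:ℝ) := by
          rw [div_eq_mul_inv]; ring
        have e2 : 4 * L * (p : ℝ) ^ 2 * ε / m * T = (L * T * (ε * m⁻¹)) * (4 * (p:ℝ)^2) := by
          rw [div_eq_mul_inv]; ring
        rw [e1, e2]
        refine mul_le_mul_of_nonneg_left ?_ c0
        nlinarith [hp1]
end

section
/- Fix y ∈ ℝⁿ, a real n×p matrix X with rows x₁ᵀ,…,xₙᵀ, ε > 0 and a positive integer m, and let β⁽ᵏ⁾ be the mini-batch SGD iterates with i.i.d. uniform with-replacement mini-batches of size m, started at β⁽⁰⁾ = 0. Then for every k ≥ 1 the covariance matrix of β⁽ᵏ⁾ satisfies the recursion Cov(β⁽ᵏ⁾) = (I − εΣ̂) Cov(β⁽ᵏ⁻¹⁾) (I − εΣ̂) + (ε²/(nm)) E[ Xᵀ( F(β⁽ᵏ⁻¹⁾) − h(β⁽ᵏ⁻¹⁾)h(β⁽ᵏ⁻¹⁾)ᵀ/n ) X ], where Σ̂ = XᵀX/n, h(β) = y − Xβ and F(β) = diag(h(β))². -/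
open Matrix MeasureTheory ProbabilityTheory

set_option maxHeartbeats 1000000

noncomputable section SGDAux


private lemma sum_tuple_eval {n m' : ℕ} (f : Fin n → ℝ) (j0 : Fin (m' + 1)) :
    ∑ s : Fin (m' + 1) → Fin n, f (s j0) = (n : ℝ) ^ m' * ∑ a, f a := by
  classical
  have key := Finset.sum_prod_piFinset (ι := Fin (m' + 1)) (Finset.univ : Finset (Fin n))
    (fun j a => if j = j0 then f a else 1)
  rw [Fintype.piFinset_univ] at key
  have h1 : ∑ s : Fin (m' + 1) → Fin n, f (s j0)
      = ∑ s : Fin (m' + 1) → Fin n, ∏ j, (if j = j0 then f (s j) else 1) := by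
    refine Finset.sum_congr rfl fun s _ => ?_
    rw [Finset.prod_ite_eq' Finset.univ j0 (fun j => f (s j))]
    simp
  rw [h1, key]
  rw [← Finset.mul_prod_erase Finset.univ _ (Finset.mem_univ j0)]
  have h2 : ∀ j ∈ Finset.univ.erase j0,
      (∑ a : Fin n, if j = j0 then f a else (1:ℝ)) = (n : ℝ) := by
    intro j hj
    simp [Finset.ne_of_mem_erase hj]
  rw [Finset.prod_congr rfl h2, Finset.prod_const,
    Finset.card_erase_of_mem (Finset.mem_univ j0), Finset.card_univ, Fintype.card_fin]
  simp [mul_comm]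

private lemma sum_tuple_eval2 {n m' : ℕ} (f g : Fin n → ℝ) {j1 j2 : Fin (m' + 1)} (hj : j1 ≠ j2) :
    ∑ s : Fin (m' + 1) → Fin n, f (s j1) * g (s j2)
      = (n : ℝ) ^ (m' - 1) * ((∑ a, f a) * (∑ a, g a)) := by
  classical
  have hj2mem : j2 ∈ Finset.univ.erase j1 := Finset.mem_erase.2 ⟨hj.symm, Finset.mem_univ j2⟩
  have key := Finset.sum_prod_piFinset (ι := Fin (m' + 1)) (Finset.univ : Finset (Fin n))
    (fun j a => if j = j1 then f a else if j = j2 then g a else 1)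
  rw [Fintype.piFinset_univ] at key
  have h1 : ∑ s : Fin (m' + 1) → Fin n, f (s j1) * g (s j2)
      = ∑ s : Fin (m' + 1) → Fin n, ∏ j, (if j = j1 then f (s j) else if j = j2 then g (s j) else 1) := by
    refine Finset.sum_congr rfl fun s _ => ?_
    rw [← Finset.mul_prod_erase Finset.univ _ (Finset.mem_univ j1),
      ← Finset.mul_prod_erase _ _ hj2mem]
    have hrest : ∏ j ∈ (Finset.univ.erase j1).erase j2,
        (if j = j1 then f (s j) else if j = j2 then g (s j) else 1) = 1 :=
      Finset.prod_eq_one fun j hj' => by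
        simp [Finset.ne_of_mem_erase hj',
          Finset.ne_of_mem_erase (Finset.mem_of_mem_erase hj')]
    rw [hrest]
    simp [hj.symm]
  rw [h1, key]
  rw [← Finset.mul_prod_erase Finset.univ _ (Finset.mem_univ j1),
    ← Finset.mul_prod_erase _ _ hj2mem]
  have e2 : (∑ a : Fin n, if j2 = j1 then f a else if j2 = j2 then g a else (1:ℝ))
      = ∑ a, g a := by simp [hj.symm]
  have h2 : ∀ j ∈ (Finset.univ.erase j1).erase j2,
      (∑ a : Fin n, if j = j1 then f a else if j = j2 then g a else (1:ℝ)) = (n : ℝ) := by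
    intro j hj'
    simp [Finset.ne_of_mem_erase hj',
      Finset.ne_of_mem_erase (Finset.mem_of_mem_erase hj')]
  rw [e2, Finset.prod_congr rfl h2, Finset.prod_const,
    Finset.card_erase_of_mem hj2mem,
    Finset.card_erase_of_mem (Finset.mem_univ j1), Finset.card_univ, Fintype.card_fin]
  have e3 : (∑ a : Fin n, if j1 = j1 then f a else if j1 = j2 then g a else (1:ℝ))
      = ∑ a, f a := by simp
  rw [e3, show m' + 1 - 1 - 1 = m' - 1 from by omega]
  ring


private lemma batch_sum {n m' : ℕ} (φi φj : Fin n → ℝ)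
    (hφi : ∑ a, φi a = 0) (hφj : ∑ a, φj a = 0) (A B c : ℝ) :
    ∑ s : Fin (m' + 1) → Fin n,
        (A + c * ∑ j1, φi (s j1)) * (B + c * ∑ j2, φj (s j2))
      = (n : ℝ) ^ (m' + 1) * (A * B)
        + c ^ 2 * (((m' + 1 : ℕ) : ℝ) * ((n : ℝ) ^ m' * ∑ a, φi a * φj a)) := by
  classical
  have hS0 : ∀ (φ : Fin n → ℝ), (∑ a, φ a = 0) →
      ∑ s : Fin (m' + 1) → Fin n, ∑ j0, φ (s j0) = 0 := by
    intro φ hφ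
    rw [Finset.sum_comm]
    have : ∀ j0 ∈ (Finset.univ : Finset (Fin (m' + 1))),
        ∑ s : Fin (m' + 1) → Fin n, φ (s j0) = 0 := by
      intro j0 _
      rw [sum_tuple_eval φ j0, hφ, mul_zero]
    rw [Finset.sum_congr rfl this, Finset.sum_const, smul_zero]
  have hS2 : ∑ s : Fin (m' + 1) → Fin n,
      (∑ j1, φi (s j1)) * (∑ j2, φj (s j2))
      = ((m' + 1 : ℕ) : ℝ) * ((n : ℝ) ^ m' * ∑ a, φi a * φj a) := by
    have e1 : ∀ s : Fin (m' + 1) → Fin n,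
        (∑ j1, φi (s j1)) * (∑ j2, φj (s j2)) = ∑ j1, ∑ j2, φi (s j1) * φj (s j2) :=
      fun s => Finset.sum_mul_sum _ _ _ _
    rw [Finset.sum_congr rfl fun s _ => e1 s]
    rw [Finset.sum_comm]
    have e2 : ∀ j1 ∈ (Finset.univ : Finset (Fin (m' + 1))),
        (∑ s : Fin (m' + 1) → Fin n, ∑ j2, φi (s j1) * φj (s j2))
          = (n : ℝ) ^ m' * ∑ a, φi a * φj a := by
      intro j1 _
      rw [Finset.sum_comm]
      have e3 : ∀ j2 ∈ (Finset.univ : Finset (Fin (m' + 1))),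
          (∑ s : Fin (m' + 1) → Fin n, φi (s j1) * φj (s j2))
            = if j1 = j2 then (n : ℝ) ^ m' * ∑ a, φi a * φj a else 0 := by
        intro j2 _
        by_cases h : j1 = j2
        · subst h
          rw [if_pos rfl, sum_tuple_eval (fun a => φi a * φj a) j1]
        · rw [if_neg h, sum_tuple_eval2 φi φj h, hφi, hφj]
          ring
      rw [Finset.sum_congr rfl e3, Finset.sum_ite_eq, if_pos (Finset.mem_univ j1)]
    rw [Finset.sum_congr rfl e2, Finset.sum_const, Finset.card_univ, Fintype.card_fin,
      nsmul_eq_mul]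
  have expand : ∀ s : Fin (m' + 1) → Fin n,
      (A + c * ∑ j1, φi (s j1)) * (B + c * ∑ j2, φj (s j2))
        = A * B + ((c * B) * ∑ j1, φi (s j1)
            + ((c * A) * ∑ j2, φj (s j2)
              + (c * c) * ((∑ j1, φi (s j1)) * (∑ j2, φj (s j2))))) := by
    intro s; ring
  rw [Finset.sum_congr rfl fun s _ => expand s,
    Finset.sum_add_distrib, Finset.sum_add_distrib, Finset.sum_add_distrib]
  have h1 : ∑ _s : Fin (m' + 1) → Fin n, A * B = (n : ℝ) ^ (m' + 1) * (A * B) := by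
    rw [Finset.sum_const, Finset.card_univ, Fintype.card_fun, Fintype.card_fin,
      Fintype.card_fin, nsmul_eq_mul]
    push_cast
    ring
  have h2 : ∑ s : Fin (m' + 1) → Fin n, (c * B) * ∑ j1, φi (s j1) = 0 := by
    rw [← Finset.mul_sum, hS0 φi hφi, mul_zero]
  have h3 : ∑ s : Fin (m' + 1) → Fin n, (c * A) * ∑ j2, φj (s j2) = 0 := by
    rw [← Finset.mul_sum, hS0 φj hφj, mul_zero]
  have h4 : ∑ s : Fin (m' + 1) → Fin n,
      (c * c) * ((∑ j1, φi (s j1)) * ∑ j2, φj (s j2))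
      = c ^ 2 * (((m' + 1 : ℕ) : ℝ) * ((n : ℝ) ^ m' * ∑ a, φi a * φj a)) := by
    rw [← Finset.mul_sum, hS2]
    ring
  rw [h1, h2, h3, h4]
  ring


private def upd {n p : ℕ} (X : Matrix (Fin n) (Fin p) ℝ) (y : Fin n → ℝ) (ε : ℝ) (m : ℕ)
    (b : Fin p → ℝ) (s : Fin m → Fin n) : Fin p → ℝ :=
  b + (ε / m) • ∑ j : Fin m, (y (s j) - ∑ l, X (s j) l * b l) • fun l => X (s j) l

private lemma upd_apply {n p : ℕ} (X : Matrix (Fin n) (Fin p) ℝ) (y : Fin n → ℝ) (ε : ℝ)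
    (m : ℕ) (b : Fin p → ℝ) (s : Fin m → Fin n) (i : Fin p) :
    upd X y ε m b s i = b i + (ε / m) * ∑ j, (y (s j) - ∑ l, X (s j) l * b l) * X (s j) i := by
  simp [upd, Finset.sum_apply, mul_comm]

private def pdrift {n p : ℕ} (X : Matrix (Fin n) (Fin p) ℝ) (y : Fin n → ℝ) (ε : ℝ)
    (b : Fin p → ℝ) (i : Fin p) : ℝ :=
  b i + ε * ((n : ℝ)⁻¹ * ∑ a, (y a - ∑ l, X a l * b l) * X a i)

private def phi {n p : ℕ} (X : Matrix (Fin n) (Fin p) ℝ) (y : Fin n → ℝ)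
    (b : Fin p → ℝ) (i : Fin p) (a : Fin n) : ℝ :=
  (y a - ∑ l, X a l * b l) * X a i - (n : ℝ)⁻¹ * ∑ a', (y a' - ∑ l, X a' l * b l) * X a' i

private lemma phi_centered {n p : ℕ} (hn : 0 < n) (X : Matrix (Fin n) (Fin p) ℝ)
    (y : Fin n → ℝ) (b : Fin p → ℝ) (i : Fin p) : ∑ a, phi X y b i a = 0 := by
  have hn' : (n : ℝ) ≠ 0 := Nat.cast_ne_zero.2 hn.ne'
  simp only [phi, Finset.sum_sub_distrib, Finset.sum_const, Finset.card_univ, Fintype.card_fin,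
    nsmul_eq_mul]
  field_simp
  ring

private lemma upd_decomp {n p : ℕ} (hn : 0 < n) (X : Matrix (Fin n) (Fin p) ℝ)
    (y : Fin n → ℝ) (ε : ℝ) (m' : ℕ) (b : Fin p → ℝ) (s : Fin (m' + 1) → Fin n) (i : Fin p) :
    upd X y ε (m' + 1) b s i
      = pdrift X y ε b i + (ε / ((m' + 1 : ℕ) : ℝ)) * ∑ j, phi X y b i (s j) := by
  have hn' : (n : ℝ) ≠ 0 := Nat.cast_ne_zero.2 hn.ne'
  have hm' : ((m' + 1 : ℕ) : ℝ) ≠ 0 := Nat.cast_ne_zero.2 (Nat.succ_ne_zero m')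
  rw [upd_apply]
  simp only [pdrift, phi, Finset.sum_sub_distrib, Finset.sum_const, Finset.card_univ,
    Fintype.card_fin, nsmul_eq_mul]
  push_cast
  field_simp
  ring

private def tcoef {n p : ℕ} (X : Matrix (Fin n) (Fin p) ℝ) (ε : ℝ) (i l : Fin p) : ℝ :=
  (if i = l then 1 else 0) - ε * ((n : ℝ)⁻¹ * ∑ a, X a i * X a l)

private lemma pdrift_eq {n p : ℕ} (X : Matrix (Fin n) (Fin p) ℝ) (y : Fin n → ℝ) (ε : ℝ)
    (b : Fin p → ℝ) (i : Fin p) :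
    pdrift X y ε b i
      = ∑ l, tcoef X ε i l * b l + ε * ((n : ℝ)⁻¹ * ∑ a, y a * X a i) := by
  classical
  have key : ∑ a, (y a - ∑ l, X a l * b l) * X a i
      = (∑ a, y a * X a i) - ∑ l, (∑ a, X a i * X a l) * b l := by
    simp only [sub_mul, Finset.sum_sub_distrib]
    congr 1
    calc ∑ a, (∑ l, X a l * b l) * X a i
        = ∑ a, ∑ l, X a l * b l * X a i :=
          Finset.sum_congr rfl fun a _ => Finset.sum_mul _ _ _
      _ = ∑ l, ∑ a, X a l * b l * X a i := Finset.sum_comm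
      _ = ∑ l, (∑ a, X a i * X a l) * b l := by
          refine Finset.sum_congr rfl fun l _ => ?_
          rw [Finset.sum_mul]
          exact Finset.sum_congr rfl fun a _ => by ring
  rw [pdrift, key]
  simp only [tcoef, sub_mul, ite_mul, one_mul, zero_mul, Finset.sum_sub_distrib,
    Finset.sum_ite_eq, if_pos (Finset.mem_univ i)]
  rw [Finset.sum_congr rfl fun l (_ : l ∈ Finset.univ) =>
    (by ring : ε * ((n : ℝ)⁻¹ * (∑ a, X a i * X a l)) * b l
      = ε * ((n : ℝ)⁻¹ * ((∑ a, X a i * X a l) * b l))), ← Finset.mul_sum, ← Finset.mul_sum]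
  ring


private lemma entry_expand {n p : ℕ} (X : Matrix (Fin n) (Fin p) ℝ) (y : Fin n → ℝ)
    (b : Fin p → ℝ) (i j : Fin p) :
    (Xᵀ * (Matrix.diagonal (fun l => (y l - (X *ᵥ b) l) ^ 2) -
        (n : ℝ)⁻¹ • Matrix.vecMulVec (y - X *ᵥ b) (y - X *ᵥ b)) * X) i j
    = ∑ a, ((y a - ∑ l, X a l * b l) * X a i) * ((y a - ∑ l, X a l * b l) * X a j)
      - (n : ℝ)⁻¹ * ((∑ a, (y a - ∑ l, X a l * b l) * X a i)
          * (∑ a, (y a - ∑ l, X a l * b l) * X a j)) := by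
  classical
  have hR : ∀ a, (X *ᵥ b) a = ∑ l, X a l * b l := by
    intro a; simp [Matrix.mulVec, dotProduct]
  calc (Xᵀ * (Matrix.diagonal (fun l => (y l - (X *ᵥ b) l) ^ 2) -
        (n : ℝ)⁻¹ • Matrix.vecMulVec (y - X *ᵥ b) (y - X *ᵥ b)) * X) i j
      = ∑ a', (∑ a, X a i * ((if a = a' then (y a - (X *ᵥ b) a) ^ 2 else 0)
          - (n : ℝ)⁻¹ * ((y a - (X *ᵥ b) a) * (y a' - (X *ᵥ b) a')))) * X a' j := by
        simp only [Matrix.mul_apply, Matrix.sub_apply, Matrix.smul_apply, smul_eq_mul,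
          Matrix.transpose_apply, Matrix.vecMulVec_apply, Matrix.diagonal_apply, Pi.sub_apply]
    _ = ∑ a', (X a' i * ((y a' - (X *ᵥ b) a')) ^ 2
          - ((n : ℝ)⁻¹ * (y a' - (X *ᵥ b) a')) * ∑ a, X a i * (y a - (X *ᵥ b) a)) * X a' j := by
        refine Finset.sum_congr rfl fun a' _ => ?_
        congr 1
        rw [Finset.sum_congr rfl fun a (_ : a ∈ Finset.univ) =>
          (by rw [mul_sub, mul_ite, mul_zero] :
            X a i * ((if a = a' then (y a - (X *ᵥ b) a) ^ 2 else 0)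
              - (n : ℝ)⁻¹ * ((y a - (X *ᵥ b) a) * (y a' - (X *ᵥ b) a')))
            = (if a = a' then X a i * (y a - (X *ᵥ b) a) ^ 2 else 0)
              - X a i * ((n : ℝ)⁻¹ * ((y a - (X *ᵥ b) a) * (y a' - (X *ᵥ b) a')))),
          Finset.sum_sub_distrib, Finset.sum_ite_eq', if_pos (Finset.mem_univ a')]
        congr 1
        rw [Finset.mul_sum]
        exact Finset.sum_congr rfl fun a _ => by ring
    _ = ∑ a, ((y a - ∑ l, X a l * b l) * X a i) * ((y a - ∑ l, X a l * b l) * X a j)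
      - (n : ℝ)⁻¹ * ((∑ a, (y a - ∑ l, X a l * b l) * X a i)
          * (∑ a, (y a - ∑ l, X a l * b l) * X a j)) := by
        simp only [hR]
        rw [Finset.sum_congr rfl fun a' (_ : a' ∈ Finset.univ) => sub_mul _ _ (X a' j),
          Finset.sum_sub_distrib]
        congr 1
        · exact Finset.sum_congr rfl fun a _ => by ring
        · have e1 : ∀ a' ∈ Finset.univ,
              (((n : ℝ)⁻¹ * (y a' - ∑ l, X a' l * b l))
                * ∑ a, X a i * (y a - ∑ l, X a l * b l)) * X a' j
              = ((n : ℝ)⁻¹ * ∑ a, X a i * (y a - ∑ l, X a l * b l))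
                * ((y a' - ∑ l, X a' l * b l) * X a' j) := fun a' _ => by ring
          rw [Finset.sum_congr rfl e1, ← Finset.mul_sum]
          have e2 : (∑ a, X a i * (y a - ∑ l, X a l * b l))
              = ∑ a, (y a - ∑ l, X a l * b l) * X a i :=
            Finset.sum_congr rfl fun a _ => mul_comm _ _
          rw [e2]
          ring


private lemma sum_batch_phi_zero {n m' : ℕ} (φ : Fin n → ℝ) (hφ : ∑ a, φ a = 0) :
    ∑ s : Fin (m' + 1) → Fin n, ∑ j, φ (s j) = 0 := by
  rw [Finset.sum_comm]
  have h : ∀ j0 ∈ (Finset.univ : Finset (Fin (m' + 1))),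
      ∑ s : Fin (m' + 1) → Fin n, φ (s j0) = 0 := by
    intro j0 _
    rw [sum_tuple_eval φ j0, hφ, mul_zero]
  rw [Finset.sum_congr rfl h, Finset.sum_const, smul_zero]

private lemma phi_prod {n p : ℕ} (hn : 0 < n) (X : Matrix (Fin n) (Fin p) ℝ)
    (y : Fin n → ℝ) (b : Fin p → ℝ) (i j : Fin p) :
    ∑ a, phi X y b i a * phi X y b j a
    = ∑ a, ((y a - ∑ l, X a l * b l) * X a i) * ((y a - ∑ l, X a l * b l) * X a j)
      - (n : ℝ)⁻¹ * ((∑ a, (y a - ∑ l, X a l * b l) * X a i)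
          * (∑ a, (y a - ∑ l, X a l * b l) * X a j)) := by
  have hn' : (n : ℝ) ≠ 0 := Nat.cast_ne_zero.2 hn.ne'
  simp only [phi]
  have expand : ∀ a ∈ (Finset.univ : Finset (Fin n)),
      ((y a - ∑ l, X a l * b l) * X a i
          - (n : ℝ)⁻¹ * ∑ a', (y a' - ∑ l, X a' l * b l) * X a' i)
        * ((y a - ∑ l, X a l * b l) * X a j
          - (n : ℝ)⁻¹ * ∑ a', (y a' - ∑ l, X a' l * b l) * X a' j)
      = ((y a - ∑ l, X a l * b l) * X a i) * ((y a - ∑ l, X a l * b l) * X a j)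
        - ((n : ℝ)⁻¹ * ∑ a', (y a' - ∑ l, X a' l * b l) * X a' i)
            * ((y a - ∑ l, X a l * b l) * X a j)
        - ((n : ℝ)⁻¹ * ∑ a', (y a' - ∑ l, X a' l * b l) * X a' j)
            * ((y a - ∑ l, X a l * b l) * X a i)
        + ((n : ℝ)⁻¹ * ∑ a', (y a' - ∑ l, X a' l * b l) * X a' i)
            * ((n : ℝ)⁻¹ * ∑ a', (y a' - ∑ l, X a' l * b l) * X a' j) :=
    fun a _ => by ring
  rw [Finset.sum_congr rfl expand, Finset.sum_add_distrib, Finset.sum_sub_distrib,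
    Finset.sum_sub_distrib, ← Finset.mul_sum, ← Finset.mul_sum, Finset.sum_const,
    Finset.card_univ, Fintype.card_fin, nsmul_eq_mul]
  field_simp
  ring

private lemma triple_shuffle {γ : Type*} [Fintype γ] {p : ℕ} (w : γ → ℝ)
    (Ti Tj : Fin p → ℝ) (d : γ → Fin p → ℝ) :
    ∑ x, (∑ l, Ti l * ∑ t, w t * (d t l * d t x)) * Tj x
      = ∑ t, w t * ((∑ l, Ti l * d t l) * (∑ x, Tj x * d t x)) := by
  calc ∑ x, (∑ l, Ti l * ∑ t, w t * (d t l * d t x)) * Tj x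
      = ∑ x, ∑ l, ∑ t, w t * (Ti l * d t l * (Tj x * d t x)) := by
        refine Finset.sum_congr rfl fun x _ => ?_
        rw [Finset.sum_mul]
        refine Finset.sum_congr rfl fun l _ => ?_
        rw [Finset.mul_sum, Finset.sum_mul]
        exact Finset.sum_congr rfl fun t _ => by ring
    _ = ∑ x, ∑ t, ∑ l, w t * (Ti l * d t l * (Tj x * d t x)) :=
        Finset.sum_congr rfl fun x _ => Finset.sum_comm
    _ = ∑ t, ∑ x, ∑ l, w t * (Ti l * d t l * (Tj x * d t x)) := Finset.sum_comm
    _ = ∑ t, w t * ((∑ l, Ti l * d t l) * (∑ x, Tj x * d t x)) := by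
        refine Finset.sum_congr rfl fun t _ => ?_
        rw [Finset.sum_mul_sum, Finset.mul_sum, Finset.sum_comm]
        exact Finset.sum_congr rfl fun l _ => (Finset.mul_sum _ _ _).symm

private lemma batch_sum' {n m' : ℕ} (φi φj : Fin n → ℝ)
    (hφi : ∑ a, φi a = 0) (hφj : ∑ a, φj a = 0) (P Q μ1 μ2 c : ℝ) :
    ∑ s : Fin (m' + 1) → Fin n,
        ((P + c * ∑ j1, φi (s j1)) - μ1) * ((Q + c * ∑ j2, φj (s j2)) - μ2)
      = (n : ℝ) ^ (m' + 1) * ((P - μ1) * (Q - μ2))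
        + c ^ 2 * (((m' + 1 : ℕ) : ℝ) * ((n : ℝ) ^ m' * ∑ a, φi a * φj a)) := by
  have reshape : ∀ s : Fin (m' + 1) → Fin n,
      ((P + c * ∑ j1, φi (s j1)) - μ1) * ((Q + c * ∑ j2, φj (s j2)) - μ2)
        = ((P - μ1) + c * ∑ j1, φi (s j1)) * ((Q - μ2) + c * ∑ j2, φj (s j2)) :=
    fun s => by ring
  rw [Finset.sum_congr rfl fun s _ => reshape s, batch_sum φi φj hφi hφj]

private lemma core {n p m : ℕ} (hn : 0 < n) (hm : 0 < m)
    (X : Matrix (Fin n) (Fin p) ℝ) (y : Fin n → ℝ) (ε : ℝ)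
    {γ : Type*} [Fintype γ] (w : γ → ℝ) (hw : ∑ t, w t = 1)
    (b : γ → Fin p → ℝ) (i j : Fin p) :
    ∑ t, ∑ s : Fin m → Fin n, w t * ((n : ℝ) ^ m)⁻¹ *
        ((upd X y ε m (b t) s i
            - ∑ t', ∑ s' : Fin m → Fin n, w t' * ((n : ℝ) ^ m)⁻¹ * upd X y ε m (b t') s' i) *
         (upd X y ε m (b t) s j
            - ∑ t', ∑ s' : Fin m → Fin n, w t' * ((n : ℝ) ^ m)⁻¹ * upd X y ε m (b t') s' j))
    = (((1 : Matrix (Fin p) (Fin p) ℝ) - ε • ((n : ℝ)⁻¹ • (Xᵀ * X))) *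
        Matrix.of (fun l l' => ∑ t, w t *
          ((b t l - ∑ t', w t' * b t' l) * (b t l' - ∑ t', w t' * b t' l'))) *
        ((1 : Matrix (Fin p) (Fin p) ℝ) - ε • ((n : ℝ)⁻¹ • (Xᵀ * X)))) i j
      + ε ^ 2 / ((n : ℝ) * (m : ℝ)) * ∑ t, w t *
          ((Xᵀ * (Matrix.diagonal (fun l => (y l - (X *ᵥ b t) l) ^ 2) -
              (n : ℝ)⁻¹ • Matrix.vecMulVec (y - X *ᵥ b t) (y - X *ᵥ b t)) * X) i j) := by
  classical
  obtain ⟨m', rfl⟩ : ∃ m'', m = m'' + 1 := ⟨m - 1, by omega⟩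
  have hn' : (n : ℝ) ≠ 0 := Nat.cast_ne_zero.2 hn.ne'
  have hm' : ((m' + 1 : ℕ) : ℝ) ≠ 0 := Nat.cast_ne_zero.2 (Nat.succ_ne_zero m')
  have hpow : ((n : ℝ) ^ (m' + 1)) ≠ 0 := pow_ne_zero _ hn'
  simp only [upd_decomp hn]
  have hmean : ∀ i0 : Fin p,
      (∑ t', ∑ s' : Fin (m' + 1) → Fin n, w t' * ((n : ℝ) ^ (m' + 1))⁻¹ *
          (pdrift X y ε (b t') i0
            + (ε / ((m' + 1 : ℕ) : ℝ)) * ∑ j0, phi X y (b t') i0 (s' j0)))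
      = ∑ t', w t' * pdrift X y ε (b t') i0 := by
    intro i0
    refine Finset.sum_congr rfl fun t' _ => ?_
    rw [← Finset.mul_sum, Finset.sum_add_distrib, Finset.sum_const, ← Finset.mul_sum,
      sum_batch_phi_zero _ (phi_centered hn X y (b t') i0), mul_zero, add_zero,
      Finset.card_univ, Fintype.card_fun, Fintype.card_fin, Fintype.card_fin, nsmul_eq_mul]
    push_cast
    field_simp
  simp only [hmean]
  have hmain : ∀ t ∈ (Finset.univ : Finset γ),
      (∑ s : Fin (m' + 1) → Fin n, w t * ((n : ℝ) ^ (m' + 1))⁻¹ *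
        (((pdrift X y ε (b t) i
            + (ε / ((m' + 1 : ℕ) : ℝ)) * ∑ j0, phi X y (b t) i (s j0))
              - ∑ t', w t' * pdrift X y ε (b t') i) *
         ((pdrift X y ε (b t) j
            + (ε / ((m' + 1 : ℕ) : ℝ)) * ∑ j0, phi X y (b t) j (s j0))
              - ∑ t', w t' * pdrift X y ε (b t') j)))
      = w t * ((pdrift X y ε (b t) i - ∑ t', w t' * pdrift X y ε (b t') i)
            * (pdrift X y ε (b t) j - ∑ t', w t' * pdrift X y ε (b t') j))
        + w t * (ε ^ 2 * ((n : ℝ)⁻¹ * (((m' + 1 : ℕ) : ℝ))⁻¹)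
            * ∑ a, phi X y (b t) i a * phi X y (b t) j a) := by
    intro t _
    rw [← Finset.mul_sum,
      batch_sum' _ _ (phi_centered hn X y (b t) i) (phi_centered hn X y (b t) j)]
    field_simp
    ring
  rw [Finset.sum_congr rfl hmain, Finset.sum_add_distrib]
  have hdiff : ∀ (i0 : Fin p) (t : γ),
      pdrift X y ε (b t) i0 - ∑ t', w t' * pdrift X y ε (b t') i0
        = ∑ l, tcoef X ε i0 l * (b t l - ∑ t', w t' * b t' l) := by
    intro i0 t
    simp only [pdrift_eq]
    rw [Finset.sum_congr rfl fun t' (_ : t' ∈ Finset.univ) => mul_add (w t') _ _,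
      Finset.sum_add_distrib, ← Finset.sum_mul, hw, one_mul]
    have swap : ∑ t', w t' * ∑ l, tcoef X ε i0 l * b t' l
        = ∑ l, tcoef X ε i0 l * ∑ t', w t' * b t' l := by
      calc ∑ t', w t' * ∑ l, tcoef X ε i0 l * b t' l
          = ∑ t', ∑ l, tcoef X ε i0 l * (w t' * b t' l) := by
            refine Finset.sum_congr rfl fun t' _ => ?_
            rw [Finset.mul_sum]
            exact Finset.sum_congr rfl fun l _ => by ring
        _ = ∑ l, ∑ t', tcoef X ε i0 l * (w t' * b t' l) := Finset.sum_comm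
        _ = ∑ l, tcoef X ε i0 l * ∑ t', w t' * b t' l :=
            Finset.sum_congr rfl fun l _ => (Finset.mul_sum _ _ _).symm
    rw [swap, add_sub_add_right_eq_sub, ← Finset.sum_sub_distrib]
    exact Finset.sum_congr rfl fun l _ => by ring
  have hT1 : ∑ t, w t * ((pdrift X y ε (b t) i - ∑ t', w t' * pdrift X y ε (b t') i)
        * (pdrift X y ε (b t) j - ∑ t', w t' * pdrift X y ε (b t') j))
      = (((1 : Matrix (Fin p) (Fin p) ℝ) - ε • ((n : ℝ)⁻¹ • (Xᵀ * X))) *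
        Matrix.of (fun l l' => ∑ t, w t *
          ((b t l - ∑ t', w t' * b t' l) * (b t l' - ∑ t', w t' * b t' l'))) *
        ((1 : Matrix (Fin p) (Fin p) ℝ) - ε • ((n : ℝ)⁻¹ • (Xᵀ * X)))) i j := by
    simp only [hdiff]
    rw [← triple_shuffle w (tcoef X ε i) (tcoef X ε j)
      (fun t l => b t l - ∑ t', w t' * b t' l)]
    simp only [Matrix.mul_apply, Matrix.sub_apply, Matrix.one_apply, Matrix.smul_apply,
      smul_eq_mul, Matrix.transpose_apply, Matrix.of_apply, tcoef]
    have hsym : ∀ x : Fin p,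
        ((if j = x then (1:ℝ) else 0) - ε * ((n : ℝ)⁻¹ * ∑ a, X a j * X a x))
          = ((if x = j then (1:ℝ) else 0) - ε * ((n : ℝ)⁻¹ * ∑ a, X a x * X a j)) := by
      intro x
      have h1 : (if j = x then (1:ℝ) else 0) = if x = j then 1 else 0 := by
        by_cases h : j = x
        · subst h; simp
        · rw [if_neg h, if_neg fun hh => h hh.symm]
      have h2 : ∑ a, X a j * X a x = ∑ a, X a x * X a j :=
        Finset.sum_congr rfl fun a _ => mul_comm _ _
      rw [h1, h2]
    exact Finset.sum_congr rfl fun x _ => by rw [hsym x]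
  have hT2 : ∑ t, w t * (ε ^ 2 * ((n : ℝ)⁻¹ * (((m' + 1 : ℕ) : ℝ))⁻¹)
        * ∑ a, phi X y (b t) i a * phi X y (b t) j a)
      = ε ^ 2 / ((n : ℝ) * ((m' + 1 : ℕ) : ℝ)) * ∑ t, w t *
          ((Xᵀ * (Matrix.diagonal (fun l => (y l - (X *ᵥ b t) l) ^ 2) -
              (n : ℝ)⁻¹ • Matrix.vecMulVec (y - X *ᵥ b t) (y - X *ᵥ b t)) * X) i j) := by
    rw [Finset.mul_sum]
    refine Finset.sum_congr rfl fun t _ => ?_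
    rw [entry_expand X y (b t) i j, ← phi_prod hn X y (b t) i j]
    field_simp
  rw [hT1, hT2]


private lemma integral_comp_eq_sum {Ω κ : Type*} [MeasurableSpace Ω] (μ : Measure Ω)
    [IsProbabilityMeasure μ] [Fintype κ] [MeasurableSpace κ] [MeasurableSingletonClass κ]
    {P : Ω → κ} (hP : Measurable P) (F : κ → ℝ) :
    ∫ ω, F (P ω) ∂μ = ∑ c, (μ (P ⁻¹' {c})).toReal * F c := by
  have : IsProbabilityMeasure (μ.map P) := Measure.isProbabilityMeasure_map hP.aemeasurable
  rw [← integral_map hP.aemeasurable (measurable_of_countable F).aestronglyMeasurable,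
    integral_fintype Integrable.of_finite]
  refine Finset.sum_congr rfl fun c _ => ?_
  rw [measureReal_def, Measure.map_apply hP (measurableSet_singleton _), smul_eq_mul]

private lemma prod_law {Ω : Type*} [MeasurableSpace Ω] {μ : Measure Ω} {n m : ℕ}
    {I : ℕ → Fin m → Ω → Fin n}
    (hunif : ∀ (k : ℕ) (j : Fin m) (a : Fin n), μ {ω | I k j ω = a} = (n : ENNReal)⁻¹)
    (hindep : iIndepFun
      (fun kj : ℕ × Fin m => I kj.1 kj.2) μ)
    (S : Finset (ℕ × Fin m)) (c : ℕ × Fin m → Fin n) :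
    μ (⋂ q ∈ S, {ω | I q.1 q.2 ω = c q}) = (n : ENNReal)⁻¹ ^ S.card := by
  have h := hindep.measure_inter_preimage_eq_mul S
    (sets := fun q => {c q}) (fun q _ => measurableSet_singleton _)
  have hs : (⋂ q ∈ S, {ω | I q.1 q.2 ω = c q})
      = ⋂ q ∈ S, (fun kj : ℕ × Fin m => I kj.1 kj.2) q ⁻¹' {c q} := rfl
  rw [hs, h]
  rw [Finset.prod_congr rfl fun q _ => (by exact hunif q.1 q.2 (c q) :
    μ ((fun kj : ℕ × Fin m => I kj.1 kj.2) q ⁻¹' {c q}) = (n : ENNReal)⁻¹)]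
  rw [Finset.prod_const]


def sgdIter {n p : ℕ} (X : Matrix (Fin n) (Fin p) ℝ) (y : Fin n → ℝ) (ε : ℝ) (m : ℕ) :
    (K : ℕ) → (Fin K × Fin m → Fin n) → Fin p → ℝ
  | 0, _ => 0
  | (K + 1), t =>
      upd X y ε m (sgdIter X y ε m K (fun q => t (q.1.castSucc, q.2)))
        (fun j => t (Fin.last K, j))



end SGDAux



/-- The covariance matrix `E[(g − Eg)(g − Eg)ᵀ]` of a random vector `g : Ω → ℝᵖ`. -/
noncomputable def vecCov {Ω : Type*} [MeasurableSpace Ω] (μ : Measure Ω) {p : ℕ}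
    (g : Ω → Fin p → ℝ) : Matrix (Fin p) (Fin p) ℝ :=
  Matrix.of fun i j =>
    ∫ ω, (g ω i - ∫ ω', g ω' i ∂μ) * (g ω j - ∫ ω', g ω' j ∂μ) ∂μ

/-- the covariance matrices of the mini-batch SGD iterates (i.i.d. uniform
with-replacement mini-batches, started at `0`) satisfy the recursion
`Cov(β⁽ᵏ⁾) = (I − εΣ̂) Cov(β⁽ᵏ⁻¹⁾) (I − εΣ̂) + (ε²/(nm)) E[Xᵀ(F(β⁽ᵏ⁻¹⁾) − h h ᵀ/n)X]`. -/


theorem stmt_10 {Ω : Type*} [MeasurableSpace Ω] (μ : Measure Ω) [IsProbabilityMeasure μ]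
    {n p m : ℕ} (hn : 0 < n) (hm : 0 < m)
    (X : Matrix (Fin n) (Fin p) ℝ) (y : Fin n → ℝ) (ε : ℝ) (hε : 0 < ε)
    (I : ℕ → Fin m → Ω → Fin n) (hmeas : ∀ k j, Measurable (I k j))
    (hunif : ∀ (k : ℕ) (j : Fin m) (a : Fin n), μ {ω | I k j ω = a} = (n : ENNReal)⁻¹)
    (hindep : iIndepFun
      (fun kj : ℕ × Fin m => I kj.1 kj.2) μ)
    (beta : ℕ → Ω → Fin p → ℝ)
    (hbeta0 : ∀ ω, beta 0 ω = 0)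
    (hbeta : ∀ (k : ℕ) (ω : Ω),
      beta (k + 1) ω = beta k ω + (ε / m) •
        ∑ j : Fin m,
          (y (I k j ω) - ∑ l, X (I k j ω) l * beta k ω l) • fun l => X (I k j ω) l) :
    ∀ k : ℕ,
      vecCov μ (beta (k + 1)) =
        ((1 : Matrix (Fin p) (Fin p) ℝ) - ε • ((n : ℝ)⁻¹ • (Xᵀ * X))) *
            vecCov μ (beta k) *
            ((1 : Matrix (Fin p) (Fin p) ℝ) - ε • ((n : ℝ)⁻¹ • (Xᵀ * X))) +
          (ε ^ 2 / ((n : ℝ) * m)) •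
            Matrix.of (fun i j =>
              ∫ ω,
                (Xᵀ *
                  (Matrix.diagonal (fun l => (y l - (X *ᵥ beta k ω) l) ^ 2) -
                    (n : ℝ)⁻¹ •
                      Matrix.vecMulVec (y - X *ᵥ beta k ω) (y - X *ᵥ beta k ω)) * X) i j
              ∂μ) := by
  classical
  have hg : ∀ (K : ℕ) (ω : Ω),
      beta K ω = sgdIter X y ε m K (fun q => I q.1 q.2 ω) := by
    intro K
    induction K with
    | zero => intro ω; rw [hbeta0]; rfl
    | succ K ih =>
        intro ω
        rw [hbeta K ω, ih ω]
        rfl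
  intro k
  -- the "past" map and the full map
  set g : (Fin k × Fin m → Fin n) → Fin p → ℝ := sgdIter X y ε m k with hgdef
  have hJp : Measurable (fun ω => (fun q : Fin k × Fin m => I q.1 q.2 ω)) :=
    measurable_pi_lambda _ fun q => hmeas q.1 q.2
  have hUb : Measurable (fun ω => (fun j : Fin m => I k j ω)) :=
    measurable_pi_lambda _ fun j => hmeas k j
  have hP : Measurable (fun ω =>
      ((fun q : Fin k × Fin m => I q.1 q.2 ω), (fun j : Fin m => I k j ω))) :=
    hJp.prodMk hUb
  have hn0 : (n : ℝ) ≠ 0 := Nat.cast_ne_zero.2 hn.ne'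
  -- laws
  have hTR : ∀ N : ℕ, ((n : ENNReal)⁻¹ ^ N).toReal = ((n : ℝ) ^ N)⁻¹ := by
    intro N
    rw [ENNReal.toReal_pow, ENNReal.toReal_inv]
    simp [inv_pow]
  have hlawQ : ∀ t : Fin k × Fin m → Fin n,
      μ ((fun ω => (fun q : Fin k × Fin m => I q.1 q.2 ω)) ⁻¹' {t})
        = (n : ENNReal)⁻¹ ^ (k * m) := by
    intro t
    have hset : (fun ω => (fun q : Fin k × Fin m => I q.1 q.2 ω)) ⁻¹' {t}
        = ⋂ q ∈ (Finset.range k ×ˢ (Finset.univ : Finset (Fin m))),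
            {ω | I q.1 q.2 ω =
              (fun q : ℕ × Fin m => if h : q.1 < k then t (⟨q.1, h⟩, q.2) else ⟨0, hn⟩) q} := by
      ext ω
      simp only [Set.mem_preimage, Set.mem_singleton_iff, Set.mem_iInter, Set.mem_setOf_eq,
        funext_iff]
      constructor
      · intro h1 q hq
        rw [Finset.mem_product, Finset.mem_range] at hq
        simp only [dif_pos hq.1]
        exact h1 (⟨q.1, hq.1⟩, q.2)
      · intro h q
        have hq : ((q.1 : ℕ), q.2) ∈ Finset.range k ×ˢ (Finset.univ : Finset (Fin m)) :=
          Finset.mem_product.2 ⟨Finset.mem_range.2 q.1.isLt, Finset.mem_univ _⟩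
        have h2 := h (↑q.1, q.2) hq
        rw [dif_pos q.1.isLt] at h2
        simpa using h2
    rw [hset, prod_law hunif hindep]
    congr 1
    rw [Finset.card_product, Finset.card_range, Finset.card_univ, Fintype.card_fin]
  have hlawP : ∀ (t : Fin k × Fin m → Fin n) (s : Fin m → Fin n),
      μ ((fun ω => ((fun q : Fin k × Fin m => I q.1 q.2 ω), (fun j : Fin m => I k j ω)))
          ⁻¹' {(t, s)}) = (n : ENNReal)⁻¹ ^ (k * m + m) := by
    intro t s
    have hset : (fun ω =>
          ((fun q : Fin k × Fin m => I q.1 q.2 ω), (fun j : Fin m => I k j ω))) ⁻¹' {(t, s)}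
        = ⋂ q ∈ (Finset.range (k + 1) ×ˢ (Finset.univ : Finset (Fin m))),
            {ω | I q.1 q.2 ω =
              (fun q : ℕ × Fin m => if h : q.1 < k then t (⟨q.1, h⟩, q.2) else s q.2) q} := by
      ext ω
      simp only [Set.mem_preimage, Set.mem_singleton_iff, Prod.mk.injEq, Set.mem_iInter,
        Set.mem_setOf_eq, funext_iff]
      constructor
      · rintro ⟨h1, h2⟩ q hq
        rw [Finset.mem_product, Finset.mem_range] at hq
        by_cases hlt : q.1 < k
        · simp only [dif_pos hlt]
          exact h1 (⟨q.1, hlt⟩, q.2)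
        · have hqk : q.1 = k := by omega
          simp only [dif_neg hlt]
          rw [hqk]
          exact h2 q.2
      · intro h
        constructor
        · intro q
          have hq : ((q.1 : ℕ), q.2) ∈ Finset.range (k + 1) ×ˢ (Finset.univ : Finset (Fin m)) :=
            Finset.mem_product.2 ⟨Finset.mem_range.2 (Nat.lt_succ_of_lt q.1.isLt),
              Finset.mem_univ _⟩
          have h2 := h (↑q.1, q.2) hq
          rw [dif_pos q.1.isLt] at h2
          simpa using h2
        · intro j
          have h2 := h (k, j) (Finset.mem_product.2
            ⟨Finset.mem_range.2 (Nat.lt_succ_self k), Finset.mem_univ _⟩)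
          rw [dif_neg (lt_irrefl k)] at h2
          exact h2
    rw [hset, prod_law hunif hindep]
    congr 1
    rw [Finset.card_product, Finset.card_range, Finset.card_univ, Fintype.card_fin]
    ring
  -- bridges
  have hB2 : ∀ G : (Fin p → ℝ) → ℝ,
      ∫ ω, G (beta k ω) ∂μ = ∑ t, ((n : ℝ) ^ (k * m))⁻¹ * G (g t) := by
    intro G
    simp only [hg k]
    have h2 := integral_comp_eq_sum μ hJp (fun c => G (g c))
    rw [h2]
    refine Finset.sum_congr rfl fun t _ => ?_
    rw [hlawQ t, hTR]
  have hB1 : ∀ F : (Fin p → ℝ) → (Fin m → Fin n) → ℝ,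
      ∫ ω, F (beta k ω) (fun j => I k j ω) ∂μ
        = ∑ t, ∑ s, ((n : ℝ) ^ (k * m))⁻¹ * ((n : ℝ) ^ m)⁻¹ * F (g t) s := by
    intro F
    simp only [hg k]
    have h2 := integral_comp_eq_sum μ hP
      (fun c : (Fin k × Fin m → Fin n) × (Fin m → Fin n) => F (g c.1) c.2)
    rw [h2, Fintype.sum_prod_type]
    refine Finset.sum_congr rfl fun t _ => Finset.sum_congr rfl fun s _ => ?_
    rw [hlawP t s, hTR, pow_add, mul_inv]
  have hwsum : ∑ _t : Fin k × Fin m → Fin n, ((n : ℝ) ^ (k * m))⁻¹ = 1 := by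
    rw [Finset.sum_const, Finset.card_univ, Fintype.card_fun, Fintype.card_prod,
      Fintype.card_fin, Fintype.card_fin, Fintype.card_fin, nsmul_eq_mul]
    push_cast
    field_simp
  -- inner means of beta k
  have e1 : ∀ l : Fin p, (∫ ω, beta k ω l ∂μ) = ∑ t, ((n : ℝ) ^ (k * m))⁻¹ * g t l :=
    fun l => hB2 (fun b => b l)
  have hCov : vecCov μ (beta k) = Matrix.of (fun l l' =>
      ∑ t, ((n : ℝ) ^ (k * m))⁻¹ *
        ((g t l - ∑ t', ((n : ℝ) ^ (k * m))⁻¹ * g t' l)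
          * (g t l' - ∑ t', ((n : ℝ) ^ (k * m))⁻¹ * g t' l'))) := by
    ext l l'
    simp only [vecCov, Matrix.of_apply]
    simp only [e1]
    exact hB2 (fun b => (b l - ∑ t', ((n : ℝ) ^ (k * m))⁻¹ * g t' l)
      * (b l' - ∑ t', ((n : ℝ) ^ (k * m))⁻¹ * g t' l'))
  have e3 : ∀ i0 : Fin p, (∫ ω, beta (k + 1) ω i0 ∂μ)
      = ∑ t, ∑ s, ((n : ℝ) ^ (k * m))⁻¹ * ((n : ℝ) ^ m)⁻¹ * upd X y ε m (g t) s i0 := by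
    intro i0
    simp only [hbeta k]
    exact hB1 (fun b s => upd X y ε m b s i0)
  ext i j
  rw [hCov]
  simp only [vecCov, Matrix.of_apply, Matrix.add_apply, Matrix.smul_apply, smul_eq_mul]
  simp only [e3]
  have e4 : ∫ ω, (beta (k + 1) ω i
        - ∑ t, ∑ s, ((n : ℝ) ^ (k * m))⁻¹ * ((n : ℝ) ^ m)⁻¹ * upd X y ε m (g t) s i)
      * (beta (k + 1) ω j
        - ∑ t, ∑ s, ((n : ℝ) ^ (k * m))⁻¹ * ((n : ℝ) ^ m)⁻¹ * upd X y ε m (g t) s j) ∂μ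
      = ∑ t, ∑ s, ((n : ℝ) ^ (k * m))⁻¹ * ((n : ℝ) ^ m)⁻¹ *
        ((upd X y ε m (g t) s i
            - ∑ t', ∑ s', ((n : ℝ) ^ (k * m))⁻¹ * ((n : ℝ) ^ m)⁻¹ * upd X y ε m (g t') s' i)
          * (upd X y ε m (g t) s j
            - ∑ t', ∑ s', ((n : ℝ) ^ (k * m))⁻¹ * ((n : ℝ) ^ m)⁻¹ * upd X y ε m (g t') s' j)) := by
    simp only [hbeta k]
    exact hB1 (fun b s =>
      (upd X y ε m b s i
          - ∑ t', ∑ s', ((n : ℝ) ^ (k * m))⁻¹ * ((n : ℝ) ^ m)⁻¹ * upd X y ε m (g t') s' i)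
        * (upd X y ε m b s j
          - ∑ t', ∑ s', ((n : ℝ) ^ (k * m))⁻¹ * ((n : ℝ) ^ m)⁻¹ * upd X y ε m (g t') s' j))
  rw [e4]
  have e5 := hB2 (fun b =>
    (Xᵀ * (Matrix.diagonal (fun l => (y l - (X *ᵥ b) l) ^ 2) -
      (n : ℝ)⁻¹ • Matrix.vecMulVec (y - X *ᵥ b) (y - X *ᵥ b)) * X) i j)
  rw [e5]
  exact core hn hm X y ε (fun _ => ((n : ℝ) ^ (k * m))⁻¹) hwsum g i j
end

section
/- Let x₁,…,xₙ ∈ ℝ, not all zero, let m be a positive integer, let ε > 0 satisfy ε · max_i x_i² ≤ 1, and let β⁽⁰⁾ ∈ ℝ. Let (I_k)_{k≥1} be independent random m-tuples of i.i.d. indices uniform on {1,…,n}, set G_k = (1/m) Σ_{j=1}^m x_{I_k(j)}², and define the SGD iterates for the responseless least squares problem by β⁽ᵏ⁾ = (1 − ε G_k) β⁽ᵏ⁻¹⁾ = ∏_{j=1}^k (1 − ε G_j) · β⁽⁰⁾. Then β⁽ᵏ⁾ converges to 0 almost surely as k → ∞. -/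
open MeasureTheory ProbabilityTheory Filter

/-- for the univariate responseless least squares problem, the SGD iterates
`β⁽ᵏ⁾ = ∏_{j=1}^k (1 − ε G_j) · β⁽⁰⁾`, with i.i.d. uniform with-replacement mini-batches
and `ε · maxᵢ xᵢ² ≤ 1`, converge to `0` almost surely. -/
theorem stmt_11 {Ω : Type*} [MeasurableSpace Ω] (μ : Measure Ω) [IsProbabilityMeasure μ]
    {n m : ℕ} (hm : 0 < m) (x : Fin n → ℝ) (hx : x ≠ 0)
    (ε : ℝ) (hε : 0 < ε) (hε1 : ε * (⨆ i, x i ^ 2) ≤ 1)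
    (β₀ : ℝ)
    (I : ℕ → Fin m → Ω → Fin n) (hmeas : ∀ k j, Measurable (I k j))
    (hunif : ∀ (k : ℕ) (j : Fin m) (a : Fin n), μ {ω | I k j ω = a} = (n : ENNReal)⁻¹)
    (hindep : iIndepFun
      (fun kj : ℕ × Fin m => I kj.1 kj.2) μ)
    (G : ℕ → Ω → ℝ)
    (hG : ∀ (k : ℕ) (ω : Ω), G k ω = (m : ℝ)⁻¹ * ∑ j : Fin m, x (I k j ω) ^ 2)
    (beta : ℕ → Ω → ℝ)
    (hbeta0 : ∀ ω, beta 0 ω = β₀)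
    (hbeta : ∀ (k : ℕ) (ω : Ω), beta (k + 1) ω = (1 - ε * G k ω) * beta k ω) :
    ∀ᵐ ω ∂μ, Tendsto (fun k => beta k ω) atTop (nhds 0) := by
  -- pick an index with nonzero coordinate
  obtain ⟨i₀, hi₀⟩ : ∃ i, x i ≠ 0 := Function.ne_iff.mp hx
  have hn0 : 0 < n := i₀.pos
  haveI : Nonempty (Fin n) := ⟨i₀⟩
  set j₀ : Fin m := ⟨0, hm⟩
  -- basic bounds
  have hsup : ∀ i, x i ^ 2 ≤ ⨆ i, x i ^ 2 := fun i =>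
    le_ciSup (Set.Finite.bddAbove (Set.finite_range (fun i => x i ^ 2))) i
  have hxi0 : 0 < x i₀ ^ 2 := by positivity
  set δ : ℝ := ε * ((m : ℝ)⁻¹ * x i₀ ^ 2) with hδdef
  have hm0 : (0:ℝ) < m := by exact_mod_cast hm
  have hδpos : 0 < δ := by positivity
  set c : ℝ := 1 - δ with hcdef
  have hc1 : c < 1 := by simp [hcdef]; linarith
  have hδ1 : δ ≤ 1 := by
    have h1 : (m:ℝ)⁻¹ * x i₀ ^ 2 ≤ x i₀ ^ 2 := by
      have : (m:ℝ)⁻¹ ≤ 1 := by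
        rw [inv_le_one_iff₀]; right; exact_mod_cast hm
      nlinarith
    have h2 : ε * ((m:ℝ)⁻¹ * x i₀ ^ 2) ≤ ε * (⨆ i, x i ^ 2) := by
      have := hsup i₀
      nlinarith
    linarith
  have hc0 : 0 ≤ c := by simp [hcdef]; linarith
  -- the events
  set E : ℕ → Set Ω := fun k => (I k j₀) ⁻¹' {i₀} with hEdef
  have hEm : ∀ k, MeasurableSet (E k) := fun k => (hmeas k j₀) (measurableSet_singleton i₀)
  have hEμ : ∀ k, μ (E k) = (n : ENNReal)⁻¹ := by
    intro k
    have := hunif k j₀ i₀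
    simpa [hEdef, Set.preimage, Set.mem_singleton_iff] using this
  -- full independence of the events
  have hEindep : iIndepSet E μ := by
    rw [iIndepSet_iff_meas_biInter hEm]
    intro s
    have key := hindep.measure_inter_preimage_eq_mul (s.image (fun k => (k, j₀)))
      (sets := fun _ => ({i₀} : Set (Fin n)))
      (fun _ _ => measurableSet_singleton i₀)
    have hinj : Function.Injective (fun k : ℕ => (k, j₀)) := fun a b h => by
      simpa using congrArg Prod.fst h
    rw [Finset.set_biInter_finset_image, Finset.prod_image (fun a _ b _ h => hinj h)] at key
    exact key
  -- second Borel-Cantelli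
  have hsum : (∑' k : ℕ, μ (E k)) = ⊤ := by
    simp only [hEμ]
    refine ENNReal.tsum_const_eq_top_of_ne_zero ?_
    simp [hn0.ne']
  have hone : μ (Filter.limsup E atTop) = 1 :=
    measure_limsup_eq_one hEm hEindep hsum
  have hae : ∀ᵐ ω ∂μ, ω ∈ Filter.limsup E atTop := by
    rw [ae_iff]
    have : {ω | ¬ ω ∈ Filter.limsup E atTop} = (Filter.limsup E atTop)ᶜ := rfl
    rw [this, measure_compl (MeasurableSet.measurableSet_limsup (fun k => hEm k))
      (measure_ne_top _ _), hone, measure_univ]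
    simp
  -- deterministic part
  filter_upwards [hae] with ω hω
  rw [Filter.mem_limsup_iff_frequently_mem] at hω
  set P : ℕ → ℝ := fun k => ∏ j ∈ Finset.range k, (1 - ε * G j ω) with hPdef
  -- bounds on factors
  have hGnonneg : ∀ k, 0 ≤ G k ω := by
    intro k; rw [hG]; positivity
  have hGle : ∀ k, G k ω ≤ ⨆ i, x i ^ 2 := by
    intro k
    rw [hG, inv_mul_le_iff₀ hm0]
    calc ∑ j : Fin m, x (I k j ω) ^ 2 ≤ ∑ _j : Fin m, ⨆ i, x i ^ 2 :=
          Finset.sum_le_sum (fun j _ => hsup _)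
      _ = m * ⨆ i, x i ^ 2 := by simp [mul_comm]
  have hfac0 : ∀ k, 0 ≤ 1 - ε * G k ω := by
    intro k
    have h1 : ε * G k ω ≤ ε * (⨆ i, x i ^ 2) :=
      mul_le_mul_of_nonneg_left (hGle k) hε.le
    linarith
  have hfac1 : ∀ k, 1 - ε * G k ω ≤ 1 := by
    intro k
    have := mul_nonneg hε.le (hGnonneg k)
    linarith
  have hP0 : ∀ k, 0 ≤ P k := fun k => Finset.prod_nonneg (fun j _ => hfac0 j)
  have hPanti : Antitone P := by
    refine antitone_nat_of_succ_le (fun k => ?_)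
    rw [hPdef]
    simp only [Finset.prod_range_succ]
    calc P k * (1 - ε * G k ω) ≤ P k * 1 :=
          mul_le_mul_of_nonneg_left (hfac1 k) (hP0 k)
      _ = P k := mul_one _
  -- on the event, strict contraction
  have hEfac : ∀ k, ω ∈ E k → 1 - ε * G k ω ≤ c := by
    intro k hk
    have hIk : I k j₀ ω = i₀ := hk
    have hGk : (m : ℝ)⁻¹ * x i₀ ^ 2 ≤ G k ω := by
      rw [hG]
      have hterm : x i₀ ^ 2 ≤ ∑ j : Fin m, x (I k j ω) ^ 2 := by
        have h := Finset.single_le_sum (f := fun j : Fin m => x (I k j ω) ^ 2)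
          (fun j _ => by positivity) (Finset.mem_univ j₀)
        simp only [hIk] at h
        exact h
      have : (m : ℝ)⁻¹ * x i₀ ^ 2 ≤ (m : ℝ)⁻¹ * ∑ j : Fin m, x (I k j ω) ^ 2 :=
        mul_le_mul_of_nonneg_left hterm (by positivity)
      exact this
    have : δ ≤ ε * G k ω := mul_le_mul_of_nonneg_left hGk hε.le
    simp only [hcdef]; linarith
  -- limit of P
  have hBdd : BddBelow (Set.range P) := ⟨0, fun y ⟨k, hk⟩ => hk ▸ hP0 k⟩
  set L : ℝ := ⨅ k, P k with hLdef
  have hPlim : Tendsto P atTop (nhds L) := tendsto_atTop_ciInf hPanti hBdd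
  have hL0 : 0 ≤ L := le_ciInf hP0
  have hLle : ∀ k, L ≤ c * P k := by
    intro k
    obtain ⟨k', hkk', hk'⟩ := (Filter.frequently_atTop.mp hω k)
    have h1 : L ≤ P (k' + 1) := ciInf_le hBdd _
    have h2 : P (k' + 1) ≤ c * P k' := by
      rw [hPdef]
      simp only [Finset.prod_range_succ]
      calc P k' * (1 - ε * G k' ω) ≤ P k' * c :=
            mul_le_mul_of_nonneg_left (hEfac k' hk') (hP0 k')
        _ = c * P k' := mul_comm _ _
    calc L ≤ P (k' + 1) := h1
      _ ≤ c * P k' := h2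
      _ ≤ c * P k := mul_le_mul_of_nonneg_left (hPanti hkk') hc0
  have hLcL : L ≤ c * L :=
    ge_of_tendsto' (hPlim.const_mul c) hLle
  have hLzero : L = 0 := by nlinarith
  have hPzero : Tendsto P atTop (nhds 0) := hLzero ▸ hPlim
  -- β k ω = P k * β₀
  have hbetaP : ∀ k, beta k ω = P k * β₀ := by
    intro k
    induction k with
    | zero => simp [hbeta0, hPdef]
    | succ k ih =>
      rw [hbeta, ih, hPdef]
      simp only [Finset.prod_range_succ]
      ring
  have : Tendsto (fun k => P k * β₀) atTop (nhds (0 * β₀)) := hPzero.mul_const β₀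
  rw [zero_mul] at this
  exact this.congr (fun k => (hbetaP k).symm)
end

section
/- Fix y ∈ ℝⁿ, a real n×p matrix X, β ∈ ℝᵖ and a real number s. Let h(β) = y − Xβ, F(β) = diag(h(β))² and Σ̂ = XᵀX/n. Then tr[ Xᵀ F(β) X · exp(2sΣ̂) ] ≤ n · ‖y − Xβ‖₂² · tr[ Σ̂ · exp(2sΣ̂) ], where exp denotes the matrix exponential. -/
open Matrix


lemma trace_nonneg_of_posSemidef {m : Type*} [Fintype m] [DecidableEq m]
    {A : Matrix m m ℝ} (hA : A.PosSemidef) : 0 ≤ A.trace := by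
  refine Finset.sum_nonneg fun i _ => ?_
  have := hA.2 (Finsupp.single i 1)
  simpa [Finsupp.sum_single_index] using this

lemma trace_mul_sq_nonneg {m : Type*} [Fintype m] [DecidableEq m]
    {B S : Matrix m m ℝ} (hB : B.PosSemidef) (hS : Sᵀ = S) :
    0 ≤ (B * (S * S)).trace := by
  have h1 : (B * (S * S)).trace = (S * B * S).trace := by
    rw [← Matrix.mul_assoc, Matrix.trace_mul_comm, ← Matrix.mul_assoc]
  rw [h1]
  refine trace_nonneg_of_posSemidef ?_
  have := hB.conjTranspose_mul_mul_same S
  rwa [conjTranspose_eq_transpose_of_trivial, hS] at this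

/-- with `h(β) = y − Xβ`, `F(β) = diag(h(β))²` and `Σ̂ = XᵀX/n`, for any
real `s`, `tr[Xᵀ F(β) X · exp(2sΣ̂)] ≤ n · ‖y − Xβ‖₂² · tr[Σ̂ · exp(2sΣ̂)]`. -/
theorem stmt_12 {n p : ℕ} (y : Fin n → ℝ) (X : Matrix (Fin n) (Fin p) ℝ)
    (β : Fin p → ℝ) (s : ℝ) :
    (Xᵀ * Matrix.diagonal (fun i => (y i - (X *ᵥ β) i) ^ 2) * X *
        NormedSpace.exp ((2 * s) • ((n : ℝ)⁻¹ • (Xᵀ * X)))).trace ≤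
      (n : ℝ) * (∑ i, (y i - (X *ᵥ β) i) ^ 2) *
        (((n : ℝ)⁻¹ • (Xᵀ * X)) *
          NormedSpace.exp ((2 * s) • ((n : ℝ)⁻¹ • (Xᵀ * X)))).trace := by
  set h : Fin n → ℝ := fun i => y i - (X *ᵥ β) i with hh
  set c : ℝ := ∑ i, h i ^ 2 with hc
  set Sig : Matrix (Fin p) (Fin p) ℝ := (n : ℝ)⁻¹ • (Xᵀ * X) with hSig
  set E : Matrix (Fin p) (Fin p) ℝ := NormedSpace.exp ((2 * s) • Sig) with hE
  -- exponential as a square of a symmetric matrix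
  set S : Matrix (Fin p) (Fin p) ℝ := NormedSpace.exp (s • Sig) with hSdef
  have hSigsymm : Sigᵀ = Sig := by
    rw [hSig, Matrix.transpose_smul, Matrix.transpose_mul, Matrix.transpose_transpose]
  have hSsymm : Sᵀ = S := by
    rw [hSdef, ← Matrix.exp_transpose, Matrix.transpose_smul, hSigsymm]
  have hEsq : E = S * S := by
    have h2 : (2 * s) • Sig = s • Sig + s • Sig := by rw [← add_smul]; ring_nf
    rw [hE, hSdef, h2]
    exact Matrix.exp_add_of_commute (s • Sig) (s • Sig) (Commute.refl _)
  rcases Nat.eq_zero_or_pos n with hn | hn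
  · subst hn
    have hz : Xᵀ * Matrix.diagonal (fun i => h i ^ 2) * X = 0 := by
      ext i j; simp [Matrix.mul_apply]
    rw [hz]
    simp
  have hn' : (n : ℝ) ≠ 0 := Nat.cast_ne_zero.mpr hn.ne'
  -- rewrite RHS
  have hRHS : (n : ℝ) * c * (Sig * E).trace = c * ((Xᵀ * X) * E).trace := by
    rw [hSig, Matrix.smul_mul, Matrix.trace_smul, smul_eq_mul]
    field_simp
  rw [hRHS]
  -- key PSD matrix
  have hd : (0 : Fin n → ℝ) ≤ fun i => c - h i ^ 2 := by
    intro i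
    simp only [Pi.zero_apply]
    have : h i ^ 2 ≤ c := Finset.single_le_sum (f := fun j => h j ^ 2)
      (fun j _ => sq_nonneg _) (Finset.mem_univ i)
    linarith
  have hDpsd : (Matrix.diagonal (fun i => c - h i ^ 2)).PosSemidef :=
    Matrix.PosSemidef.diagonal hd
  have hBpsd : (Xᵀ * Matrix.diagonal (fun i => c - h i ^ 2) * X).PosSemidef := by
    have := hDpsd.conjTranspose_mul_mul_same X
    rwa [conjTranspose_eq_transpose_of_trivial] at this
  have hsplit : Xᵀ * Matrix.diagonal (fun i => c - h i ^ 2) * X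
      = c • (Xᵀ * X) - Xᵀ * Matrix.diagonal (fun i => h i ^ 2) * X := by
    have : Matrix.diagonal (fun i => c - h i ^ 2)
        = c • (1 : Matrix (Fin n) (Fin n) ℝ) - Matrix.diagonal (fun i => h i ^ 2) := by
      rw [← Matrix.diagonal_sub]
      congr 1
      funext i
      simp [Matrix.smul_eq_diagonal_mul]
    rw [this, Matrix.mul_sub, Matrix.sub_mul, Matrix.mul_smul, Matrix.mul_one,
      Matrix.smul_mul]
  have key : 0 ≤ ((c • (Xᵀ * X) - Xᵀ * Matrix.diagonal (fun i => h i ^ 2) * X) * E).trace := by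
    rw [← hsplit, hEsq]
    exact trace_mul_sq_nonneg hBpsd hSsymm
  rw [Matrix.sub_mul, Matrix.trace_sub, Matrix.smul_mul, Matrix.trace_smul, smul_eq_mul]
    at key
  linarith
end

section
/- Let X be a nonzero real n×p matrix, y ∈ ℝⁿ, σ₊ the smallest nonzero singular value of X, and ε > 0, m > 0 reals. Let b be the orthogonal projection of y onto the orthocomplement of the column space of X (the least squares residual y − X β̂ols), and for β ∈ ℝᵖ set r = y − Xβ and q = X(β − β̂ols), so that r = b − q. Then (ε²/(mn²)) Σ_{i=1}^n r_i² [(XXᵀ)²]_{ii} − ‖Xᵀ r‖₂²/n² ≤ −c₀ ‖q‖₂² + C₀, where c₀ = σ₊²/n² − 2ε² maxᵢ [(XXᵀ)²]ᵢᵢ/(mn²) and C₀ = 2ε² ‖b‖₂² maxᵢ [(XXᵀ)²]ᵢᵢ/(mn²). -/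
open Matrix

lemma key_spec {p : ℕ} (A : Matrix (Fin p) (Fin p) ℝ) (hA : A.IsHermitian)
    (hpsd : A.PosSemidef) (σ2 : ℝ) (_hσ2 : 0 ≤ σ2)
    (hmin : ∀ s ∈ spectrum ℝ A, s ≠ 0 → σ2 ≤ s) (v : Fin p → ℝ) :
    σ2 * (v ⬝ᵥ (A *ᵥ v)) ≤ (A *ᵥ v) ⬝ᵥ (A *ᵥ v) := by
  classical
  set U : Matrix (Fin p) (Fin p) ℝ := (hA.eigenvectorUnitary : Matrix (Fin p) (Fin p) ℝ) with hU
  have hUst : star U = Uᵀ := by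
    rw [← conjTranspose_eq_transpose_of_trivial]; rfl
  have hUtU : Uᵀ * U = 1 := by rw [← hUst]; exact Unitary.coe_star_mul_self _
  have hUUt : U * Uᵀ = 1 := by rw [← hUst]; exact Unitary.coe_mul_star_self _
  have horth : ∀ u w : Fin p → ℝ, (U *ᵥ u) ⬝ᵥ (U *ᵥ w) = u ⬝ᵥ w := by
    intro u w
    rw [dotProduct_mulVec, ← mulVec_transpose, mulVec_mulVec, hUtU, one_mulVec]
  set lam := hA.eigenvalues with hlam
  have hspec : A = U * diagonal lam * Uᵀ := by
    have := hA.spectral_theorem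
    simpa [← hUst, Function.comp] using this
  set w : Fin p → ℝ := Uᵀ *ᵥ v with hw
  have hv : U *ᵥ w = v := by rw [hw, mulVec_mulVec, hUUt, one_mulVec]
  have hAv : A *ᵥ v = U *ᵥ (diagonal lam *ᵥ w) := by
    rw [hspec]; simp only [hw, ← mulVec_mulVec]
  have h1 : v ⬝ᵥ (A *ᵥ v) = ∑ i, lam i * w i ^ 2 := by
    rw [hAv]
    nth_rewrite 1 [← hv]
    rw [horth, dotProduct]
    exact Finset.sum_congr rfl fun i _ => by rw [mulVec_diagonal]; ring
  have h2 : (A *ᵥ v) ⬝ᵥ (A *ᵥ v) = ∑ i, lam i ^ 2 * w i ^ 2 := by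
    rw [hAv, horth, dotProduct]
    refine Finset.sum_congr rfl fun i _ => ?_
    rw [mulVec_diagonal]; ring
  rw [h1, h2, Finset.mul_sum]
  refine Finset.sum_le_sum fun i _ => ?_
  have hnn : 0 ≤ lam i := hpsd.eigenvalues_nonneg i
  rcases eq_or_ne (lam i) 0 with h | h
  · simp [h]
  · have := hmin (lam i) (hA.eigenvalues_mem_spectrum_real i) h
    nlinarith [mul_nonneg (mul_nonneg hnn (sq_nonneg (w i))) (sub_nonneg.mpr this)]


/-- the drift bound in the underparametrized case.  With `σ₊` the smallest
nonzero singular value of a nonzero matrix `X`, `β̂ols` a least squares solution (so that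
`b = y − Xβ̂ols` is the projection of `y` onto the orthocomplement of `col(X)`, i.e.
`Xᵀb = 0`), `r = y − Xβ` and `q = X(β − β̂ols)`,
`(ε²/(mn²)) Σᵢ rᵢ² [(XXᵀ)²]ᵢᵢ − ‖Xᵀr‖₂²/n² ≤ −c₀‖q‖₂² + C₀` where
`c₀ = σ₊²/n² − 2ε² maxᵢ [(XXᵀ)²]ᵢᵢ/(mn²)` and `C₀ = 2ε²‖b‖₂² maxᵢ [(XXᵀ)²]ᵢᵢ/(mn²)`. -/
theorem stmt_15 {n p : ℕ} (X : Matrix (Fin n) (Fin p) ℝ) (hX : X ≠ 0) (y : Fin n → ℝ)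
    (σ : ℝ) (hσpos : 0 < σ)
    (hσ : σ ^ 2 ∈ spectrum ℝ (Xᵀ * X))
    (hσmin : ∀ s ∈ spectrum ℝ (Xᵀ * X), s ≠ 0 → σ ^ 2 ≤ s)
    (ε m : ℝ) (hε : 0 < ε) (hm : 0 < m)
    (βols : Fin p → ℝ) (hols : Xᵀ *ᵥ (y - X *ᵥ βols) = 0)
    (β : Fin p → ℝ) :
    ε ^ 2 / (m * (n : ℝ) ^ 2) *
        ∑ i, (y - X *ᵥ β) i ^ 2 * ((X * Xᵀ) ^ 2 : Matrix (Fin n) (Fin n) ℝ) i i -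
        (∑ i, (Xᵀ *ᵥ (y - X *ᵥ β)) i ^ 2) / (n : ℝ) ^ 2 ≤
      -(σ ^ 2 / (n : ℝ) ^ 2 -
            2 * ε ^ 2 * (⨆ i, ((X * Xᵀ) ^ 2 : Matrix (Fin n) (Fin n) ℝ) i i) /
              (m * (n : ℝ) ^ 2)) *
          ∑ i, (X *ᵥ (β - βols)) i ^ 2 +
        2 * ε ^ 2 * (∑ i, (y - X *ᵥ βols) i ^ 2) *
          (⨆ i, ((X * Xᵀ) ^ 2 : Matrix (Fin n) (Fin n) ℝ) i i) / (m * (n : ℝ) ^ 2) := by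
  classical
  -- notation
  set D2 : Matrix (Fin n) (Fin n) ℝ := (X * Xᵀ) ^ 2 with hD2
  set M : ℝ := ⨆ i, D2 i i with hM
  set r : Fin n → ℝ := y - X *ᵥ β with hrdef
  set b : Fin n → ℝ := y - X *ᵥ βols with hbdef
  set v : Fin p → ℝ := β - βols with hvdef
  set q : Fin n → ℝ := X *ᵥ v with hqdef
  have hn : 0 < n := by
    rcases Nat.eq_zero_or_pos n with h | h
    · subst h; exact absurd (Subsingleton.elim X 0) hX
    · exact h
  have hr : r = b - q := by
    rw [hrdef, hbdef, hqdef, hvdef, mulVec_sub]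
    abel
  -- diagonal entries of D2 are nonneg and ≤ M
  have hdiag : ∀ i, D2 i i = ∑ j, (X * Xᵀ) i j ^ 2 := by
    intro i
    rw [hD2, pow_two, mul_apply]
    refine Finset.sum_congr rfl fun j _ => ?_
    have : (X * Xᵀ) j i = (X * Xᵀ) i j := by
      rw [mul_apply, mul_apply]
      exact Finset.sum_congr rfl fun k _ => by simp [transpose_apply, mul_comm]
    rw [this]; ring
  have hdnn : ∀ i, 0 ≤ D2 i i := fun i => by
    rw [hdiag]; exact Finset.sum_nonneg fun j _ => sq_nonneg _
  have hdM : ∀ i, D2 i i ≤ M := fun i =>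
    le_ciSup (f := fun i => D2 i i) (Set.Finite.bddAbove (Set.finite_range _)) i
  have hMnn : 0 ≤ M := le_trans (hdnn ⟨0, hn⟩) (hdM ⟨0, hn⟩)
  -- first bound
  have h1 : ∑ i, r i ^ 2 * D2 i i ≤ M * (2 * ∑ i, b i ^ 2 + 2 * ∑ i, q i ^ 2) := by
    have : ∀ i, r i ^ 2 * D2 i i ≤ (2 * b i ^ 2 + 2 * q i ^ 2) * M := by
      intro i
      have hri : r i = b i - q i := by rw [hr]; rfl
      have h2 : r i ^ 2 ≤ 2 * b i ^ 2 + 2 * q i ^ 2 := by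
        rw [hri]; nlinarith [sq_nonneg (b i + q i)]
      calc r i ^ 2 * D2 i i ≤ r i ^ 2 * M := by
            exact mul_le_mul_of_nonneg_left (hdM i) (sq_nonneg _)
        _ ≤ (2 * b i ^ 2 + 2 * q i ^ 2) * M := mul_le_mul_of_nonneg_right h2 hMnn
    calc ∑ i, r i ^ 2 * D2 i i ≤ ∑ i, (2 * b i ^ 2 + 2 * q i ^ 2) * M :=
          Finset.sum_le_sum fun i _ => this i
      _ = (∑ i, (2 * b i ^ 2 + 2 * q i ^ 2)) * M := (Finset.sum_mul ..).symm
      _ = M * (2 * ∑ i, b i ^ 2 + 2 * ∑ i, q i ^ 2) := by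
          rw [Finset.sum_add_distrib, ← Finset.mul_sum, ← Finset.mul_sum]; ring
  -- second bound
  have hXr : Xᵀ *ᵥ r = -((Xᵀ * X) *ᵥ v) := by
    rw [hr, mulVec_sub, hols, hqdef, zero_sub, mulVec_mulVec]
  have hquad : v ⬝ᵥ ((Xᵀ * X) *ᵥ v) = ∑ i, q i ^ 2 := by
    rw [← mulVec_mulVec, dotProduct_mulVec, vecMul_transpose, ← hqdef, dotProduct]
    exact Finset.sum_congr rfl fun i _ => by ring
  have h2 : σ ^ 2 * ∑ i, q i ^ 2 ≤ ∑ i, (Xᵀ *ᵥ r) i ^ 2 := by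
    have hkey := key_spec (Xᵀ * X) (isHermitian_conjTranspose_mul_self X)
      (posSemidef_conjTranspose_mul_self X) (σ ^ 2) (le_of_lt (pow_pos hσpos 2)) hσmin v
    rw [hquad] at hkey
    refine hkey.trans_eq ?_
    rw [dotProduct, hXr]
    exact Finset.sum_congr rfl fun i _ => by simp [Pi.neg_apply]; ring
  -- assemble
  have hc : 0 ≤ ε ^ 2 / (m * (n : ℝ) ^ 2) := by positivity
  have hn2 : (0 : ℝ) < (n : ℝ) ^ 2 := by positivity
  calc ε ^ 2 / (m * (n : ℝ) ^ 2) * ∑ i, r i ^ 2 * D2 i i -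
        (∑ i, (Xᵀ *ᵥ r) i ^ 2) / (n : ℝ) ^ 2
      ≤ ε ^ 2 / (m * (n : ℝ) ^ 2) * (M * (2 * ∑ i, b i ^ 2 + 2 * ∑ i, q i ^ 2)) -
        (σ ^ 2 * ∑ i, q i ^ 2) / (n : ℝ) ^ 2 := by
        refine sub_le_sub (mul_le_mul_of_nonneg_left h1 hc) ?_
        exact div_le_div_of_nonneg_right h2 hn2.le
    _ = -(σ ^ 2 / (n : ℝ) ^ 2 - 2 * ε ^ 2 * M / (m * (n : ℝ) ^ 2)) * ∑ i, q i ^ 2 +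
        2 * ε ^ 2 * (∑ i, b i ^ 2) * M / (m * (n : ℝ) ^ 2) := by ring
end

section
/- Let φ(x) = x(1 + e^{−x})/(1 − e^{−x}) for x > 0. Then for every t > 0, every L > 0 and every s with 0 < s ≤ L, one has 1 − e^{−2ts} ≤ (φ(tL)/t) · (1 − e^{−ts})²/s. -/
open Real

private lemma aux_ne {x : ℝ} (hx : 0 < x) : (1 : ℝ) - exp (-x) ≠ 0 := by
  have h : exp (-x) < 1 := exp_lt_one_iff.mpr (by linarith)
  linarith

private lemma aux_mono {a b : ℝ} (ha : 0 < a) (hab : a ≤ b) :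
    a * (1 + exp (-a)) / (1 - exp (-a)) ≤ b * (1 + exp (-b)) / (1 - exp (-b)) := by
  set f : ℝ → ℝ := fun x => x * (1 + exp (-x)) / (1 - exp (-x)) with hf
  have hd : ∀ x ∈ Set.Ioi (0:ℝ), HasDerivAt f
      (((1 * (1 + exp (-x)) + x * (-exp (-x))) * (1 - exp (-x)) -
        (x * (1 + exp (-x))) * (exp (-x))) / (1 - exp (-x))^2) x := by
    intro x hx
    have hx0 : (0:ℝ) < x := hx
    have hexp : HasDerivAt (fun y : ℝ => exp (-y)) (-exp (-x)) x := by
      have := (Real.hasDerivAt_exp (-x)).comp x ((hasDerivAt_id x).neg)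
      simp at this; exact this
    have h1 : HasDerivAt (fun y : ℝ => y * (1 + exp (-y)))
        (1 * (1 + exp (-x)) + x * (-exp (-x))) x := by
      have := (hasDerivAt_id x).mul ((hasDerivAt_const x 1).add hexp)
      simp at this ⊢; exact this
    have h2 : HasDerivAt (fun y : ℝ => 1 - exp (-y)) (exp (-x)) x := by
      have := (hasDerivAt_const x (1:ℝ)).sub hexp
      simp at this; exact this
    exact h1.div h2 (aux_ne hx0)
  have hmono : MonotoneOn f (Set.Ioi 0) := by
    apply monotoneOn_of_deriv_nonneg (convex_Ioi 0)
    · exact fun x hx => (hd x hx).continuousAt.continuousWithinAt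
    · intro x hx
      rw [interior_Ioi] at hx
      exact (hd x hx).differentiableAt.differentiableWithinAt
    · intro x hx
      rw [interior_Ioi] at hx
      rw [(hd x hx).deriv]
      have hx0 : (0:ℝ) < x := hx
      set u := exp (-x) with hu
      have hu0 : 0 < u := exp_pos _
      have hu1 : u < 1 := exp_lt_one_iff.mpr (by linarith)
      have hsinh : x < Real.sinh x := Real.self_lt_sinh_iff.mpr hx0
      have heu : exp x * u = 1 := by rw [hu, ← exp_add]; simp
      have hkey : 2 * x * u < 1 - u ^ 2 := by
        rw [Real.sinh_eq] at hsinh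
        nlinarith [mul_lt_mul_of_pos_right hsinh hu0]
      apply div_nonneg _ (by positivity)
      nlinarith
  exact hmono (Set.mem_Ioi.mpr ha) (Set.mem_Ioi.mpr (lt_of_lt_of_le ha hab)) hab

/-- with `φ(x) = x(1 + e^{−x})/(1 − e^{−x})`, for every `t > 0`, `L > 0`
and `0 < s ≤ L`, `1 − e^{−2ts} ≤ (φ(tL)/t) · (1 − e^{−ts})²/s`. -/
theorem stmt_17 (φ : ℝ → ℝ)
    (hφ : ∀ x : ℝ, 0 < x → φ x = x * (1 + Real.exp (-x)) / (1 - Real.exp (-x))) :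
    ∀ t L s : ℝ, 0 < t → 0 < L → 0 < s → s ≤ L →
      1 - Real.exp (-(2 * t * s)) ≤
        φ (t * L) / t * ((1 - Real.exp (-(t * s))) ^ 2 / s) := by
  intro t L s ht hL hs hsL
  rw [hφ _ (by positivity)]
  have ha : 0 < t * s := by positivity
  have hab : t * s ≤ t * L := by nlinarith
  have key := aux_mono ha hab
  have hne := aux_ne ha
  have h1 : 1 - Real.exp (-(2 * t * s)) =
      (t * s * (1 + exp (-(t * s))) / (1 - exp (-(t * s)))) / t *
        ((1 - exp (-(t * s))) ^ 2 / s) := by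
    rw [show -(2 * t * s) = -(t * s) + -(t * s) by ring, exp_add]
    field_simp
    ring
  rw [h1]
  gcongr
end

section
/- Let X be a real n×p matrix, β₀ ∈ ℝᵖ, σ > 0, and let η be a random vector in ℝⁿ with E[η_i] = 0 and E[η_i η_j] = σ² if i = j and 0 otherwise. Let y = Xβ₀ + η and β̂gf(t) = (XᵀX)⁺(I − exp(−tΣ̂))Xᵀy with Σ̂ = XᵀX/n. Then for every t ≥ 0, the estimation variance of gradient flow satisfies E‖β̂gf(t) − E β̂gf(t)‖₂² = σ² · tr[ (XᵀX)⁺ (I − exp(−tΣ̂))² ]. -/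
open Matrix Filter MeasureTheory

namespace MPAux

variable {p : ℕ}

/-- Conjugation of a diagonal matrix by `V`. -/
noncomputable def conjD (V : Matrix (Fin p) (Fin p) ℝ) (d : Fin p → ℝ) :
    Matrix (Fin p) (Fin p) ℝ := V * Matrix.diagonal d * Vᵀ

variable {V : Matrix (Fin p) (Fin p) ℝ}

lemma conjD_mul (hV : Vᵀ * V = 1) (d e : Fin p → ℝ) :
    conjD V d * conjD V e = conjD V (fun i => d i * e i) := by
  unfold conjD
  rw [show (V * diagonal d * Vᵀ) * (V * diagonal e * Vᵀ)
      = V * (diagonal d * (Vᵀ * V) * diagonal e) * Vᵀ by noncomm_ring, hV, mul_one,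
    diagonal_mul_diagonal]

lemma conjD_one (hV' : V * Vᵀ = 1) : conjD V (fun _ => 1) = 1 := by
  unfold conjD
  rw [show Matrix.diagonal (fun _ : Fin p => (1:ℝ)) = 1 by
    rw [show (fun _ : Fin p => (1:ℝ)) = (1 : Fin p → ℝ) from rfl]; exact diagonal_one,
    mul_one, hV']

lemma conjD_transpose (d : Fin p → ℝ) : (conjD V d)ᵀ = conjD V d := by
  simp [conjD, Matrix.transpose_mul, Matrix.mul_assoc]

lemma conjD_smul (c : ℝ) (d : Fin p → ℝ) : c • conjD V d = conjD V (c • d) := by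
  unfold conjD
  rw [← Matrix.smul_mul, ← Matrix.mul_smul, diagonal_smul]

lemma conjD_neg (d : Fin p → ℝ) : -conjD V d = conjD V (fun i => -(d i)) := by
  unfold conjD
  rw [← Matrix.neg_mul, ← Matrix.mul_neg, diagonal_neg]

lemma conjD_add (d e : Fin p → ℝ) : conjD V d + conjD V e = conjD V (fun i => d i + e i) := by
  unfold conjD
  rw [← Matrix.add_mul, ← Matrix.mul_add, diagonal_add]

lemma conjD_sub (d e : Fin p → ℝ) :
    conjD V d - conjD V e = conjD V (fun i => d i - e i) := by
  unfold conjD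
  rw [← Matrix.sub_mul, ← Matrix.mul_sub, diagonal_sub]

lemma conjD_trace (hV : Vᵀ * V = 1) (d : Fin p → ℝ) : (conjD V d).trace = ∑ i, d i := by
  unfold conjD
  rw [Matrix.trace_mul_cycle, hV, one_mul, Matrix.trace_diagonal]

lemma isUnit_V (hV' : V * Vᵀ = 1) : IsUnit V := by
  rw [Matrix.isUnit_iff_isUnit_det]
  have := congrArg Matrix.det hV'
  rw [Matrix.det_mul, Matrix.det_transpose, Matrix.det_one] at this
  exact IsUnit.of_mul_eq_one _ this

lemma V_inv (hV' : V * Vᵀ = 1) : V⁻¹ = Vᵀ := Matrix.inv_eq_right_inv hV'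

lemma conjD_inv (hV : Vᵀ * V = 1) (hV' : V * Vᵀ = 1) {d : Fin p → ℝ} (hd : ∀ i, d i ≠ 0) :
    (conjD V d)⁻¹ = conjD V (fun i => (d i)⁻¹) := by
  apply Matrix.inv_eq_right_inv
  rw [conjD_mul hV]
  rw [show (fun i => d i * (d i)⁻¹) = fun _ => (1:ℝ) from funext fun i => mul_inv_cancel₀ (hd i)]
  exact conjD_one hV'

lemma conjD_exp (hV : Vᵀ * V = 1) (hV' : V * Vᵀ = 1) (d : Fin p → ℝ) :
    NormedSpace.exp (conjD V d) = conjD V (fun i => NormedSpace.exp (d i)) := by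
  unfold conjD
  rw [← V_inv hV', Matrix.exp_conj _ _ (isUnit_V hV'), Matrix.exp_diagonal, Pi.exp_def]

lemma conjD_tendsto {α : Type*} {l : Filter α} {g : α → Fin p → ℝ} {f : Fin p → ℝ}
    (h : ∀ i, Tendsto (fun a => g a i) l (nhds (f i))) :
    Tendsto (fun a => conjD V (g a)) l (nhds (conjD V f)) := by
  have h1 : Tendsto (fun a => Matrix.diagonal (g a)) l (nhds (Matrix.diagonal f)) := by
    apply tendsto_pi_nhds.mpr; intro i; apply tendsto_pi_nhds.mpr; intro j
    by_cases hij : i = j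
    · subst hij; simpa [Matrix.diagonal_apply_eq] using h i
    · simpa [Matrix.diagonal_apply_ne _ hij] using tendsto_const_nhds
  have hc : Continuous fun D : Matrix (Fin p) (Fin p) ℝ => V * D * Vᵀ :=
    (continuous_const.matrix_mul continuous_id).matrix_mul continuous_const
  exact (hc.tendsto _).comp h1

/-- Real spectral theorem, packaged. -/
lemma exists_spectral (A : Matrix (Fin p) (Fin p) ℝ) (hA : A.IsHermitian) :
    ∃ (V : Matrix (Fin p) (Fin p) ℝ) (lam : Fin p → ℝ),
      Vᵀ * V = 1 ∧ V * Vᵀ = 1 ∧ A = conjD V lam := by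
  have hstar : (star (hA.eigenvectorUnitary : Matrix (Fin p) (Fin p) ℝ))
      = (hA.eigenvectorUnitary : Matrix (Fin p) (Fin p) ℝ)ᵀ := by
    rw [Matrix.star_eq_conjTranspose, Matrix.conjTranspose_eq_transpose_of_trivial]
  refine ⟨hA.eigenvectorUnitary, hA.eigenvalues, ?_, ?_, ?_⟩
  · rw [← hstar]; exact (Unitary.mem_iff.mp hA.eigenvectorUnitary.2).1
  · rw [← hstar]; exact (Unitary.mem_iff.mp hA.eigenvectorUnitary.2).2
  · have := hA.spectral_theorem
    rw [Unitary.conjStarAlgAut_apply, hstar] at this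
    simp only [RCLike.ofReal_real_eq_id, Function.id_comp] at this
    exact this

lemma moorePenrose_eq {A V : Matrix (Fin p) (Fin p) ℝ} {lam : Fin p → ℝ}
    (hV : Vᵀ * V = 1) (hV' : V * Vᵀ = 1) (hA : A = conjD V lam) :
    moorePenrose A = conjD V (fun i => if lam i = 0 then 0 else (lam i)⁻¹) := by
  have hAT : Aᵀ = A := by rw [hA, conjD_transpose]
  have heq : ∀ δ : ℝ, 0 < δ →
      (Aᵀ * A + δ • (1 : Matrix (Fin p) (Fin p) ℝ))⁻¹ * Aᵀ
        = conjD V (fun i => (lam i ^ 2 + δ)⁻¹ * lam i) := by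
    intro δ hδ
    have h1 : Aᵀ * A + δ • (1 : Matrix (Fin p) (Fin p) ℝ)
        = conjD V (fun i => lam i ^ 2 + δ) := by
      rw [hAT, hA, conjD_mul hV, ← conjD_one (V := V) hV', conjD_smul, conjD_add]
      congr 1
      funext i
      simp [sq]
    rw [h1, hAT, hA, conjD_inv hV hV' (fun i => by positivity), conjD_mul hV]
  have htend : Tendsto (fun δ : ℝ => (Aᵀ * A + δ • (1 : Matrix (Fin p) (Fin p) ℝ))⁻¹ * Aᵀ)
      (nhdsWithin 0 (Set.Ioi 0))
      (nhds (conjD V fun i => if lam i = 0 then 0 else (lam i)⁻¹)) := by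
    have hev : ∀ᶠ δ in nhdsWithin (0:ℝ) (Set.Ioi 0),
        conjD V (fun i => (lam i ^ 2 + δ)⁻¹ * lam i)
          = (Aᵀ * A + δ • (1 : Matrix (Fin p) (Fin p) ℝ))⁻¹ * Aᵀ := by
      filter_upwards [self_mem_nhdsWithin] with δ hδ using (heq δ hδ).symm
    refine Tendsto.congr' hev (conjD_tendsto fun i => ?_)
    by_cases h : lam i = 0
    · simpa [h] using tendsto_const_nhds
    · have h0 : lam i ^ 2 + 0 ≠ 0 := by positivity
      have hc : ContinuousAt (fun δ : ℝ => (lam i ^ 2 + δ)⁻¹ * lam i) 0 :=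
        ((continuousAt_const.add continuousAt_id).inv₀ h0).mul continuousAt_const
      have hval : (lam i ^ 2 + 0)⁻¹ * lam i = (lam i)⁻¹ := by
        rw [add_zero, sq, mul_inv, mul_assoc, inv_mul_cancel₀ h, mul_one]
      rw [if_neg h]
      have ht := hc.tendsto
      simp only [hval] at ht
      exact tendsto_nhdsWithin_of_tendsto_nhds ht
  rw [moorePenrose]
  exact htend.limUnder_eq

/-- The key trace identity. -/
lemma trace_key {n p : ℕ} (X : Matrix (Fin n) (Fin p) ℝ) (t : ℝ) :
    ((moorePenrose (Xᵀ * X) * ((1 : Matrix (Fin p) (Fin p) ℝ) -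
        NormedSpace.exp (-(t • ((n : ℝ)⁻¹ • (Xᵀ * X))))) * Xᵀ) *
      (moorePenrose (Xᵀ * X) * ((1 : Matrix (Fin p) (Fin p) ℝ) -
        NormedSpace.exp (-(t • ((n : ℝ)⁻¹ • (Xᵀ * X))))) * Xᵀ)ᵀ).trace
    = (moorePenrose (Xᵀ * X) *
        ((1 : Matrix (Fin p) (Fin p) ℝ) -
          NormedSpace.exp (-(t • ((n : ℝ)⁻¹ • (Xᵀ * X))))) ^ 2).trace := by
  obtain ⟨V, lam, hV, hV', hA⟩ :=
    exists_spectral (Xᵀ * X) (Matrix.isHermitian_conjTranspose_mul_self X)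
  have hP : moorePenrose (Xᵀ * X) = conjD V (fun i => if lam i = 0 then 0 else (lam i)⁻¹) :=
    moorePenrose_eq hV hV' hA
  have hE : (1 : Matrix (Fin p) (Fin p) ℝ) - NormedSpace.exp (-(t • ((n : ℝ)⁻¹ • (Xᵀ * X))))
      = conjD V (fun i => 1 - NormedSpace.exp (-(t * ((n:ℝ)⁻¹ * lam i)))) := by
    have h1 : -(t • ((n : ℝ)⁻¹ • (Xᵀ * X))) = conjD V (fun i => -(t * ((n:ℝ)⁻¹ * lam i))) := by
      rw [hA, conjD_smul, conjD_smul, conjD_neg]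
      rfl
    rw [h1, conjD_exp hV hV', ← conjD_one (V := V) hV', conjD_sub]
  have hfact : ∀ P E : Matrix (Fin p) (Fin p) ℝ,
      (P * E * Xᵀ) * (P * E * Xᵀ)ᵀ = P * E * (Xᵀ * X) * Eᵀ * Pᵀ := by
    intro P E
    rw [Matrix.transpose_mul, Matrix.transpose_mul, Matrix.transpose_transpose]
    simp only [Matrix.mul_assoc]
  rw [hfact, hP, hE, hA, conjD_transpose, conjD_transpose, sq,
    conjD_mul hV, conjD_mul hV, conjD_mul hV, conjD_mul hV, conjD_mul hV, conjD_mul hV,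
    conjD_trace hV, conjD_trace hV]
  refine Finset.sum_congr rfl fun i _ => ?_
  by_cases h : lam i = 0
  · simp [h]
  · simp only [if_neg h]
    field_simp

end MPAux

/-- in the model `y = Xβ₀ + η` with `E[η] = 0` and `Cov(η) = σ²I`, the
estimation variance of gradient flow satisfies, for every `t ≥ 0`,
`E‖β̂gf(t) − Eβ̂gf(t)‖₂² = σ² · tr[(XᵀX)⁺ (I − exp(−tΣ̂))²]`. -/
theorem stmt_18 {Ω : Type*} [MeasurableSpace Ω] (μ : Measure Ω) [IsProbabilityMeasure μ]
    {n p : ℕ} (X : Matrix (Fin n) (Fin p) ℝ) (β₀ : Fin p → ℝ) (σ : ℝ) (hσ : 0 < σ)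
    (η : Ω → Fin n → ℝ)
    (hint : ∀ i, Integrable (fun ω => η ω i) μ)
    (hint2 : ∀ i j, Integrable (fun ω => η ω i * η ω j) μ)
    (hmean : ∀ i, ∫ ω, η ω i ∂μ = 0)
    (hcov : ∀ i j, ∫ ω, η ω i * η ω j ∂μ = if i = j then σ ^ 2 else 0)
    (y : Ω → Fin n → ℝ) (hy : ∀ ω, y ω = X *ᵥ β₀ + η ω) :
    ∀ t : ℝ, 0 ≤ t →
      ∫ ω, ∑ i, (betaGF X (y ω) t i - ∫ ω', betaGF X (y ω') t i ∂μ) ^ 2 ∂μ =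
        σ ^ 2 *
          (moorePenrose (Xᵀ * X) *
            ((1 : Matrix (Fin p) (Fin p) ℝ) -
              NormedSpace.exp (-(t • ((n : ℝ)⁻¹ • (Xᵀ * X))))) ^ 2).trace := by
  intro t ht
  classical
  set M : Matrix (Fin p) (Fin n) ℝ := moorePenrose (Xᵀ * X) *
      ((1 : Matrix (Fin p) (Fin p) ℝ) - NormedSpace.exp (-(t • ((n : ℝ)⁻¹ • (Xᵀ * X))))) * Xᵀ
      with hM
  have hbeta : ∀ ω i, betaGF X (y ω) t i = (M *ᵥ (X *ᵥ β₀)) i + ∑ j, M i j * η ω j := by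
    intro ω i
    rw [show betaGF X (y ω) t = M *ᵥ y ω by rw [hM]; rfl, hy ω, Matrix.mulVec_add]
    simp only [Pi.add_apply]
    rfl
  have hintM : ∀ i, Integrable (fun ω => ∑ j, M i j * η ω j) μ :=
    fun i => integrable_finset_sum _ fun j _ => (hint j).const_mul _
  have hmean' : ∀ i, ∫ ω, betaGF X (y ω) t i ∂μ = (M *ᵥ (X *ᵥ β₀)) i := by
    intro i
    calc ∫ ω, betaGF X (y ω) t i ∂μ
        = ∫ ω, ((M *ᵥ (X *ᵥ β₀)) i + ∑ j, M i j * η ω j) ∂μ :=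
          integral_congr_ae (Eventually.of_forall fun ω => hbeta ω i)
      _ = (M *ᵥ (X *ᵥ β₀)) i + ∑ j, M i j * ∫ ω, η ω j ∂μ := by
          rw [integral_add (integrable_const _) (hintM i), integral_const, probReal_univ,
            one_smul,
            integral_finset_sum _ (fun j _ => (hint j).const_mul _)]
          congr 1
          exact Finset.sum_congr rfl fun j _ => integral_const_mul _ _
      _ = (M *ᵥ (X *ᵥ β₀)) i := by simp [hmean]
  have hdev : ∀ ω, ∑ i, (betaGF X (y ω) t i - ∫ ω', betaGF X (y ω') t i ∂μ) ^ 2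
      = ∑ i, (∑ j, M i j * η ω j) ^ 2 := by
    intro ω
    refine Finset.sum_congr rfl fun i _ => ?_
    rw [hmean' i, hbeta ω i]
    ring
  have expand : ∀ ω, ∑ i, (∑ j, M i j * η ω j) ^ 2
      = ∑ i, ∑ j, ∑ k, (M i j * M i k) * (η ω j * η ω k) := by
    intro ω
    refine Finset.sum_congr rfl fun i _ => ?_
    rw [sq, Finset.sum_mul_sum]
    exact Finset.sum_congr rfl fun j _ => Finset.sum_congr rfl fun k _ => by ring
  calc
    ∫ ω, ∑ i, (betaGF X (y ω) t i - ∫ ω', betaGF X (y ω') t i ∂μ) ^ 2 ∂μ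
        = ∫ ω, ∑ i, ∑ j, ∑ k, (M i j * M i k) * (η ω j * η ω k) ∂μ := by
          exact integral_congr_ae (Eventually.of_forall fun ω => (hdev ω).trans (expand ω))
    _ = ∑ i, ∑ j, ∑ k, (M i j * M i k) * ∫ ω, η ω j * η ω k ∂μ := by
          rw [integral_finset_sum _ (fun i _ => integrable_finset_sum _
            (fun j _ => integrable_finset_sum _ (fun k _ => (hint2 j k).const_mul _)))]
          refine Finset.sum_congr rfl fun i _ => ?_
          rw [integral_finset_sum _ (fun j _ => integrable_finset_sum _
            (fun k _ => (hint2 j k).const_mul _))]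
          refine Finset.sum_congr rfl fun j _ => ?_
          rw [integral_finset_sum _ (fun k _ => (hint2 j k).const_mul _)]
          exact Finset.sum_congr rfl fun k _ => integral_const_mul _ _
    _ = σ ^ 2 * ∑ i, ∑ j, M i j ^ 2 := by
          simp_rw [hcov, mul_ite, mul_zero, Finset.sum_ite_eq, Finset.mem_univ, if_true,
            Finset.mul_sum, sq]
          exact Finset.sum_congr rfl fun i _ => Finset.sum_congr rfl fun j _ => by ring
    _ = σ ^ 2 * (M * Mᵀ).trace := by
          congr 1
          simp [Matrix.trace, Matrix.mul_apply, Matrix.diag, sq]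
    _ = σ ^ 2 * (moorePenrose (Xᵀ * X) *
          ((1 : Matrix (Fin p) (Fin p) ℝ) -
            NormedSpace.exp (-(t • ((n : ℝ)⁻¹ • (Xᵀ * X))))) ^ 2).trace := by
          rw [hM, MPAux.trace_key]
end

section
/- Let X be a real n×p matrix, β₀ ∈ ℝᵖ, and let η be a random vector in ℝⁿ with E[η_i] = 0 for all i. Let y = Xβ₀ + η and β̂gf(t) = (XᵀX)⁺(I − exp(−tΣ̂))Xᵀy with Σ̂ = XᵀX/n. Then for every t ≥ 0, E[β̂gf(t)] − β₀ = −exp(−tΣ̂) β₀; consequently the squared bias of gradient flow at time t equals ‖exp(−tΣ̂) β₀‖₂². -/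
open Matrix Filter MeasureTheory

namespace StmtAux

variable {p : ℕ}

/-- conjugation of a diagonal matrix -/
noncomputable def conjD (U : Matrix (Fin p) (Fin p) ℝ) (v : Fin p → ℝ) :
    Matrix (Fin p) (Fin p) ℝ :=
  U * diagonal v * star U

lemma diagonal_add' (v w : Fin p → ℝ) :
    diagonal (v + w) = diagonal v + diagonal w := by
  ext i j
  by_cases h : i = j <;> simp [diagonal, h]

lemma diagonal_sub' (v w : Fin p → ℝ) :
    diagonal (v - w) = diagonal v - diagonal w := by
  ext i j
  by_cases h : i = j <;> simp [diagonal, h]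

lemma diagonal_one' : diagonal (1 : Fin p → ℝ) = (1 : Matrix (Fin p) (Fin p) ℝ) := by
  ext i j
  by_cases h : i = j <;> simp [diagonal, one_apply, h]

lemma diagonal_const (δ : ℝ) :
    diagonal (fun _ : Fin p => δ) = δ • (1 : Matrix (Fin p) (Fin p) ℝ) := by
  ext i j
  by_cases h : i = j <;> simp [diagonal, one_apply, h]

lemma conjD_mul {U : Matrix (Fin p) (Fin p) ℝ} (hU : star U * U = 1)
    (v w : Fin p → ℝ) : conjD U v * conjD U w = conjD U (v * w) := by
  simp only [conjD, Matrix.mul_assoc]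
  rw [← Matrix.mul_assoc (star U) U, hU, Matrix.one_mul,
    ← Matrix.mul_assoc (diagonal v), diagonal_mul_diagonal]
  rfl

lemma conjD_add (U : Matrix (Fin p) (Fin p) ℝ) (v w : Fin p → ℝ) :
    conjD U v + conjD U w = conjD U (v + w) := by
  simp only [conjD, diagonal_add', add_mul, mul_add]

lemma conjD_sub (U : Matrix (Fin p) (Fin p) ℝ) (v w : Fin p → ℝ) :
    conjD U v - conjD U w = conjD U (v - w) := by
  simp only [conjD, diagonal_sub', sub_mul, mul_sub]

lemma conjD_one {U : Matrix (Fin p) (Fin p) ℝ} (hU' : U * star U = 1) :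
    conjD U 1 = 1 := by
  rw [conjD, diagonal_one', Matrix.mul_one, hU']

lemma smul_one_eq_conjD {U : Matrix (Fin p) (Fin p) ℝ} (hU' : U * star U = 1) (δ : ℝ) :
    δ • (1 : Matrix (Fin p) (Fin p) ℝ) = conjD U (fun _ => δ) := by
  rw [conjD, diagonal_const, Matrix.mul_smul, Matrix.mul_one, Matrix.smul_mul, hU']

lemma conjD_inv {U : Matrix (Fin p) (Fin p) ℝ} (hU : star U * U = 1)
    (hU' : U * star U = 1) {v : Fin p → ℝ} (hv : ∀ i, v i ≠ 0) :
    (conjD U v)⁻¹ = conjD U v⁻¹ := by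
  apply inv_eq_right_inv
  have hvv : v * v⁻¹ = 1 := funext fun i => mul_inv_cancel₀ (hv i)
  rw [conjD_mul hU, hvv, conjD_one hU']

lemma continuous_conjD (U : Matrix (Fin p) (Fin p) ℝ) :
    Continuous fun v : Fin p → ℝ => conjD U v := by
  unfold conjD
  exact (continuous_const.matrix_mul continuous_id.matrix_diagonal).matrix_mul
    continuous_const

end StmtAux

open StmtAux

lemma key_identity {n p : ℕ} (X : Matrix (Fin n) (Fin p) ℝ) (c : ℝ) :
    moorePenrose (Xᵀ * X) *
        ((1 : Matrix (Fin p) (Fin p) ℝ) - NormedSpace.exp (c • (Xᵀ * X))) *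
        Xᵀ * X =
      (1 : Matrix (Fin p) (Fin p) ℝ) - NormedSpace.exp (c • (Xᵀ * X)) := by
  set A : Matrix (Fin p) (Fin p) ℝ := Xᵀ * X with hAdef
  have hA : A.IsHermitian := by
    have := isHermitian_conjTranspose_mul_self X
    simpa using this
  set U : Matrix (Fin p) (Fin p) ℝ := (hA.eigenvectorUnitary : Matrix (Fin p) (Fin p) ℝ)
    with hUdef
  have hU : star U * U = 1 := Matrix.mem_unitaryGroup_iff'.mp hA.eigenvectorUnitary.2
  have hU' : U * star U = 1 := Matrix.mem_unitaryGroup_iff.mp hA.eigenvectorUnitary.2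
  set d : Fin p → ℝ := hA.eigenvalues with hddef
  have hAeq : A = conjD U d := by
    have := hA.spectral_theorem
    simpa [RCLike.ofReal_real_eq_id, conjD] using this
  have hAT : Aᵀ = A := by
    have h := hA
    rwa [Matrix.IsHermitian, conjTranspose_eq_transpose_of_trivial] at h
  have hUinv : U⁻¹ = star U := inv_eq_left_inv hU
  -- the exponential as a conjugated diagonal
  have hexp : NormedSpace.exp (c • A) = conjD U fun i => Real.exp (c * d i) := by
    have hUunit : IsUnit U := ⟨⟨U, star U, hU', hU⟩, rfl⟩
    have h1 : c • A = U * diagonal (c • d) * U⁻¹ := by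
      rw [hUinv, hAeq, conjD, diagonal_smul, mul_smul_comm, smul_mul_assoc]
    rw [h1, Matrix.exp_conj U _ hUunit, Matrix.exp_diagonal,
      hUinv, conjD]
    congr 2
    rw [Pi.exp_def]
    funext i
    simp [Real.exp_eq_exp_ℝ]
  -- the regularized inverse as a conjugated diagonal
  have hinv : ∀ δ : ℝ, δ ∈ Set.Ioi (0 : ℝ) →
      conjD U (fun i => d i / (d i ^ 2 + δ)) = (Aᵀ * A + δ • 1)⁻¹ * Aᵀ := by
    intro δ hδ
    rw [Set.mem_Ioi] at hδ
    have hv : ∀ i, ((d * d + fun _ => δ : Fin p → ℝ)) i ≠ 0 := by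
      intro i
      have h0 : 0 < d i * d i + δ := add_pos_of_nonneg_of_pos (mul_self_nonneg _) hδ
      simpa using h0.ne'
    have harg : (fun i => d i / (d i ^ 2 + δ)) = ((d * d + fun _ => δ : Fin p → ℝ)⁻¹ * d) := by
      funext i
      simp only [Pi.mul_apply, Pi.inv_apply, Pi.add_apply]
      rw [div_eq_inv_mul, sq]
    rw [hAT, hAeq, conjD_mul hU, smul_one_eq_conjD hU', conjD_add,
      conjD_inv hU hU' hv, conjD_mul hU, harg]
  -- the limit
  set g : Fin p → ℝ := fun i => if d i = 0 then 0 else (d i)⁻¹ with hgdef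
  have htend : Tendsto (fun δ : ℝ => conjD U fun i => d i / (d i ^ 2 + δ))
      (nhdsWithin 0 (Set.Ioi 0)) (nhds (conjD U g)) := by
    apply ((continuous_conjD U).tendsto _).comp
    rw [tendsto_pi_nhds]
    intro i
    by_cases hd : d i = 0
    · have : ∀ δ : ℝ, d i / (d i ^ 2 + δ) = g i := by
        intro δ; simp [hd, hgdef]
      simp only [this]
      exact tendsto_const_nhds
    · have hne : d i ^ 2 + 0 ≠ 0 := by simpa using pow_ne_zero 2 hd
      have hca : ContinuousAt (fun δ : ℝ => d i / (d i ^ 2 + δ)) 0 :=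
        (continuousAt_const.div (continuousAt_const.add continuousAt_id) hne)
      have : Tendsto (fun δ : ℝ => d i / (d i ^ 2 + δ)) (nhdsWithin 0 (Set.Ioi 0))
          (nhds (d i / (d i ^ 2 + 0))) :=
        hca.tendsto.mono_left nhdsWithin_le_nhds
      have hval : d i / (d i ^ 2 + 0) = g i := by
        simp only [hgdef, hd, if_false, add_zero, sq]
        field_simp
      rwa [hval] at this
  have hMP : moorePenrose A = conjD U g := by
    have htend2 : Tendsto (fun δ : ℝ => (Aᵀ * A + δ • (1 : Matrix (Fin p) (Fin p) ℝ))⁻¹ * Aᵀ)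
        (nhdsWithin 0 (Set.Ioi 0)) (nhds (conjD U g)) :=
      htend.congr' (Filter.eventually_of_mem self_mem_nhdsWithin hinv)
    exact htend2.limUnder_eq
  -- put everything together
  have hone : (1 : Matrix (Fin p) (Fin p) ℝ) = conjD U 1 := (conjD_one hU').symm
  have hsub : (1 : Matrix (Fin p) (Fin p) ℝ) - NormedSpace.exp (c • A) =
      conjD U (1 - fun i => Real.exp (c * d i)) := by
    rw [hexp, hone, conjD_sub]
  calc moorePenrose A * ((1 : Matrix (Fin p) (Fin p) ℝ) - NormedSpace.exp (c • A)) * Xᵀ * X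
      = moorePenrose A * ((1 : Matrix (Fin p) (Fin p) ℝ) - NormedSpace.exp (c • A)) * A := by
        rw [Matrix.mul_assoc]
    _ = conjD U (g * ((1 - fun i => Real.exp (c * d i)) * d)) := by
        rw [hMP, hsub, hAeq, conjD_mul hU, conjD_mul hU, mul_assoc]
    _ = conjD U (1 - fun i => Real.exp (c * d i)) := by
        have harg : g * ((1 - fun i => Real.exp (c * d i)) * d) =
            (1 - fun i => Real.exp (c * d i)) := by
          funext i
          by_cases hd : d i = 0
          · simp [hgdef, hd]
          · simp only [hgdef, Pi.mul_apply, Pi.sub_apply, Pi.one_apply, hd, if_false]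
            field_simp
        rw [harg]
    _ = (1 : Matrix (Fin p) (Fin p) ℝ) - NormedSpace.exp (c • A) := hsub.symm

/-- in the model `y = Xβ₀ + η` with mean-zero noise `η`, for every `t ≥ 0`
the bias vector of gradient flow is `E[β̂gf(t)] − β₀ = −exp(−tΣ̂) β₀`; consequently the
squared bias at time `t` is `‖exp(−tΣ̂) β₀‖₂²`. -/
theorem stmt_19 {Ω : Type*} [MeasurableSpace Ω] (μ : Measure Ω) [IsProbabilityMeasure μ]
    {n p : ℕ} (X : Matrix (Fin n) (Fin p) ℝ) (β₀ : Fin p → ℝ)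
    (η : Ω → Fin n → ℝ)
    (hint : ∀ i, Integrable (fun ω => η ω i) μ)
    (hmean : ∀ i, ∫ ω, η ω i ∂μ = 0)
    (y : Ω → Fin n → ℝ) (hy : ∀ ω, y ω = X *ᵥ β₀ + η ω) :
    ∀ t : ℝ, 0 ≤ t →
      (fun i => ∫ ω, betaGF X (y ω) t i ∂μ) - β₀ =
          -(NormedSpace.exp (-(t • ((n : ℝ)⁻¹ • (Xᵀ * X)))) *ᵥ β₀) ∧
        ∑ i, ((∫ ω, betaGF X (y ω) t i ∂μ) - β₀ i) ^ 2 =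
          ∑ i, (NormedSpace.exp (-(t • ((n : ℝ)⁻¹ • (Xᵀ * X)))) *ᵥ β₀) i ^ 2 := by
  intro t ht
  set E : Matrix (Fin p) (Fin p) ℝ :=
    NormedSpace.exp (-(t • ((n : ℝ)⁻¹ • (Xᵀ * X)))) with hE
  set M : Matrix (Fin p) (Fin n) ℝ :=
    moorePenrose (Xᵀ * X) * ((1 : Matrix (Fin p) (Fin p) ℝ) - E) * Xᵀ with hM
  have hmean2 : ∀ i, ∫ ω, betaGF X (y ω) t i ∂μ = (M *ᵥ (X *ᵥ β₀)) i := by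
    intro i
    have hb : ∀ ω, betaGF X (y ω) t i = (M *ᵥ (X *ᵥ β₀)) i + ∑ j, M i j * η ω j := by
      intro ω
      show (M *ᵥ y ω) i = _
      rw [hy ω, mulVec_add]
      rfl
    have hInt : Integrable (fun ω => ∑ j, M i j * η ω j) μ :=
      integrable_finset_sum _ fun j _ => (hint j).const_mul _
    calc ∫ ω, betaGF X (y ω) t i ∂μ
        = ∫ ω, ((M *ᵥ (X *ᵥ β₀)) i + ∑ j, M i j * η ω j) ∂μ := by
          exact integral_congr_ae (Filter.Eventually.of_forall fun ω => hb ω)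
      _ = (M *ᵥ (X *ᵥ β₀)) i + ∫ ω, ∑ j, M i j * η ω j ∂μ := by
          rw [integral_add (integrable_const _) hInt, integral_const]
          simp
      _ = (M *ᵥ (X *ᵥ β₀)) i := by
          rw [integral_finset_sum _ fun j _ => (hint j).const_mul _]
          simp only [integral_const_mul, hmean, mul_zero, Finset.sum_const_zero, add_zero]
  have hMX : M * X = (1 : Matrix (Fin p) (Fin p) ℝ) - E := by
    have hc : -(t • ((n : ℝ)⁻¹ • (Xᵀ * X))) = (-(t * (n : ℝ)⁻¹)) • (Xᵀ * X) := by
      rw [smul_smul, neg_smul]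
    rw [hM, hE, hc]
    exact key_identity X _
  have hmain : (fun i => ∫ ω, betaGF X (y ω) t i ∂μ) - β₀ = -(E *ᵥ β₀) := by
    funext i
    simp only [Pi.sub_apply, Pi.neg_apply, hmean2]
    rw [mulVec_mulVec, hMX, sub_mulVec, one_mulVec]
    simp only [Pi.sub_apply]
    ring
  refine ⟨hmain, ?_⟩
  apply Finset.sum_congr rfl
  intro i _
  have h := congrFun hmain i
  simp only [Pi.sub_apply, Pi.neg_apply] at h
  rw [h, neg_sq]
end
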